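/- arXiv:2403.04604 — 10 statements merged into one kernel-verified Lean document; each statement's English description precedes it below -/
import Mathlib

section
/- Let d ∈ ℕ, let H : ℝ → Matrix (Fin d) (Fin d) ℂ be a differentiable family of matrices with H(t) Hermitian for every t, let ψ : ℝ → EuclideanSpace ℂ (Fin d) be differentiable with ‖ψ(t)‖ = 1 for every t, and let lam : ℝ → ℝ be differentiable with H(t).mulVec (ψ t) = lam t • ψ t for every t. Then for every t, the derivative of lam at t equals the (real) inner product ⟪ψ t, (deriv H t).mulVec (ψ t)⟫, i.e. lam'(t) = ⟨ψ(t), H'(t) ψ(t)⟩. (Hellmann–Feynman theorem: the first-order variation of a nondegenerate eigenvalue of a Hermitian family equals the expectation value of the variation of the Hamiltonian in the corresponding normalized eigenstate; this is the key computational step δ⟨Ψ_{n,w}|Ĥ_w|Ψ_{n,w}⟩ = ∫ δw ρ_{n,w} used in the proof of Theorem 1.) -/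
/-- Entrywise derivative of a family of matrices. -/
noncomputable def entryDeriv {d : ℕ} (H : ℝ → Matrix (Fin d) (Fin d) ℂ) (t : ℝ) :
    Matrix (Fin d) (Fin d) ℂ :=
  fun i j => deriv (fun s => H s i j) t

/-- Hellmann–Feynman theorem. -/
theorem hellmann_feynman (d : ℕ) (H : ℝ → Matrix (Fin d) (Fin d) ℂ)
    (hH : ∀ i j, Differentiable ℝ fun t => H t i j)
    (hHerm : ∀ t, (H t).IsHermitian)
    (ψ : ℝ → EuclideanSpace ℂ (Fin d)) (hψ : Differentiable ℝ ψ)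
    (hnorm : ∀ t, ‖ψ t‖ = 1)
    (lam : ℝ → ℝ) (hlam : Differentiable ℝ lam)
    (heig : ∀ t, (H t).mulVec (ψ t) = lam t • ψ t) (t : ℝ) :
    ((deriv lam t : ℝ) : ℂ) =
      inner ℂ (ψ t) (WithLp.toLp 2 ((entryDeriv H t).mulVec (ψ t)) : EuclideanSpace ℂ (Fin d)) := by
  classical
  set ψ' : EuclideanSpace ℂ (Fin d) := deriv ψ t with hψ'def
  set H' : Matrix (Fin d) (Fin d) ℂ := entryDeriv H t with hH'def
  -- coordinate derivatives
  have hcoord : ∀ s : ℝ, ∀ i, HasDerivAt (fun s => ψ s i) (deriv ψ s i) s := by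
    intro s i
    have h1 : HasDerivAt ψ (deriv ψ s) s := (hψ s).hasDerivAt
    exact ((EuclideanSpace.proj (𝕜 := ℂ) i).restrictScalars ℝ).hasFDerivAt.comp_hasDerivAt s h1
  have hconj : ∀ s : ℝ, ∀ i,
      HasDerivAt (fun s => (starRingEnd ℂ) (ψ s i)) ((starRingEnd ℂ) (deriv ψ s i)) s :=
    fun s i => (hcoord s i).star
  have hHd : ∀ i j, HasDerivAt (fun s => H s i j) (entryDeriv H t i j) t :=
    fun i j => ((hH i j) t).hasDerivAt
  -- the norm-squared function is constant 1
  have hnormsq : ∀ s : ℝ, ∑ i, (starRingEnd ℂ) (ψ s i) * ψ s i = 1 := by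
    intro s
    have h1 : (inner ℂ (ψ s) (ψ s) : ℂ) = (‖ψ s‖ : ℂ)^2 := inner_self_eq_norm_sq_to_K (ψ s)
    rw [hnorm s] at h1
    have h2 : ∑ i, (starRingEnd ℂ) (ψ s i) * ψ s i = inner ℂ (ψ s) (ψ s) := by
      rw [PiLp.inner_apply]
      exact Finset.sum_congr rfl fun i _ => by simp only [RCLike.inner_apply]; ring
    rw [h2, h1]; simp
  have hzero : ∑ i, ((starRingEnd ℂ) (ψ' i) * ψ t i + (starRingEnd ℂ) (ψ t i) * ψ' i) = 0 := by
    have h1 : HasDerivAt (fun s => ∑ i, (starRingEnd ℂ) (ψ s i) * ψ s i)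
        (∑ i, ((starRingEnd ℂ) (deriv ψ t i) * ψ t i + (starRingEnd ℂ) (ψ t i) * deriv ψ t i)) t :=
      HasDerivAt.fun_sum (fun i _ => (hconj t i).mul (hcoord t i))
    have h2 : HasDerivAt (fun s => ∑ i, (starRingEnd ℂ) (ψ s i) * ψ s i) 0 t := by
      have := hasDerivAt_const t (1 : ℂ)
      exact this.congr_of_eventuallyEq (Filter.Eventually.of_forall fun s => hnormsq s)
    have := h1.unique h2
    simpa [hψ'def] using this
  -- g s = lam s as complex number
  have hg : ∀ s : ℝ, ∑ i, ∑ j, (starRingEnd ℂ) (ψ s i) * H s i j * ψ s j = ((lam s : ℝ) : ℂ) := by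
    intro s
    have h1 : ∀ i, ∑ j, (starRingEnd ℂ) (ψ s i) * H s i j * ψ s j
        = (starRingEnd ℂ) (ψ s i) * ((H s).mulVec (ψ s) i) := by
      intro i
      simp [Matrix.mulVec, dotProduct, Finset.mul_sum, mul_assoc]
    calc ∑ i, ∑ j, (starRingEnd ℂ) (ψ s i) * H s i j * ψ s j
        = ∑ i, (starRingEnd ℂ) (ψ s i) * ((H s).mulVec (ψ s) i) := by
          exact Finset.sum_congr rfl fun i _ => h1 i
      _ = ∑ i, (starRingEnd ℂ) (ψ s i) * ((lam s : ℂ) * ψ s i) := by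
          rw [heig s]; rfl
      _ = (lam s : ℂ) * ∑ i, (starRingEnd ℂ) (ψ s i) * ψ s i := by
          rw [Finset.mul_sum]; exact Finset.sum_congr rfl fun i _ => by ring
      _ = ((lam s : ℝ) : ℂ) := by rw [hnormsq s, mul_one]
  -- derivative of g
  have hgd : HasDerivAt (fun s => ∑ i, ∑ j, (starRingEnd ℂ) (ψ s i) * H s i j * ψ s j)
      (∑ i, ∑ j, (((starRingEnd ℂ) (ψ' i) * H t i j + (starRingEnd ℂ) (ψ t i) * H' i j) * ψ t j
        + (starRingEnd ℂ) (ψ t i) * H t i j * ψ' j)) t := by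
    apply HasDerivAt.fun_sum
    intro i _
    apply HasDerivAt.fun_sum
    intro j _
    exact ((hconj t i).mul (hHd i j)).mul (hcoord t j)
  have hld : HasDerivAt (fun s => ((lam s : ℝ) : ℂ)) ((deriv lam t : ℝ) : ℂ) t := by
    exact HasDerivAt.ofReal_comp (hlam t).hasDerivAt
  have hgd' : HasDerivAt (fun s => ∑ i, ∑ j, (starRingEnd ℂ) (ψ s i) * H s i j * ψ s j)
      ((deriv lam t : ℝ) : ℂ) t :=
    hld.congr_of_eventuallyEq (Filter.Eventually.of_forall fun s => hg s)
  have hkey : ((deriv lam t : ℝ) : ℂ)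
      = ∑ i, ∑ j, (((starRingEnd ℂ) (ψ' i) * H t i j + (starRingEnd ℂ) (ψ t i) * H' i j) * ψ t j
        + (starRingEnd ℂ) (ψ t i) * H t i j * ψ' j) := hgd'.unique hgd
  -- first cross term: ∑ i ∑ j conj ψ' i * H i j * ψ j = lam t * ⟪ψ', ψ⟫
  have hA : ∑ i, ∑ j, (starRingEnd ℂ) (ψ' i) * H t i j * ψ t j
      = (lam t : ℂ) * ∑ i, (starRingEnd ℂ) (ψ' i) * ψ t i := by
    rw [Finset.mul_sum]
    refine Finset.sum_congr rfl fun i _ => ?_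
    have h1 : ∑ j, (starRingEnd ℂ) (ψ' i) * H t i j * ψ t j
        = (starRingEnd ℂ) (ψ' i) * ((H t).mulVec (ψ t) i) := by
      simp [Matrix.mulVec, dotProduct, Finset.mul_sum, mul_assoc]
    rw [h1, heig t]
    show (starRingEnd ℂ) (ψ' i) * ((lam t : ℂ) * ψ t i) = _
    ring
  -- second cross term: use Hermitian
  have hB : ∑ i, ∑ j, (starRingEnd ℂ) (ψ t i) * H t i j * ψ' j
      = (lam t : ℂ) * ∑ j, (starRingEnd ℂ) (ψ t j) * ψ' j := by
    rw [Finset.sum_comm, Finset.mul_sum]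
    refine Finset.sum_congr rfl fun j _ => ?_
    have hherm : ∀ i, H t i j = (starRingEnd ℂ) (H t j i) := by
      intro i
      have := (hHerm t).apply i j
      -- IsHermitian.apply : Hᴴ i j = H i j, i.e. conj (H j i) = H i j
      exact this.symm
    have h1 : ∑ i, (starRingEnd ℂ) (ψ t i) * H t i j * ψ' j
        = ((starRingEnd ℂ) (∑ i, H t j i * ψ t i)) * ψ' j := by
      rw [map_sum, Finset.sum_mul]
      refine Finset.sum_congr rfl fun i _ => ?_
      rw [hherm i, map_mul]
      ring
    rw [h1]
    have h2 : ∑ i, H t j i * ψ t i = (H t).mulVec (ψ t) j := rfl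
    rw [h2, heig t]
    show (starRingEnd ℂ) ((lam t : ℂ) * ψ t j) * ψ' j = _
    rw [map_mul, Complex.conj_ofReal]
    ring
  -- combine
  have hsplit : ∑ i, ∑ j, (((starRingEnd ℂ) (ψ' i) * H t i j + (starRingEnd ℂ) (ψ t i) * H' i j) * ψ t j
        + (starRingEnd ℂ) (ψ t i) * H t i j * ψ' j)
      = (∑ i, ∑ j, (starRingEnd ℂ) (ψ' i) * H t i j * ψ t j)
        + (∑ i, ∑ j, (starRingEnd ℂ) (ψ t i) * H' i j * ψ t j)
        + (∑ i, ∑ j, (starRingEnd ℂ) (ψ t i) * H t i j * ψ' j) := by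
    rw [← Finset.sum_add_distrib, ← Finset.sum_add_distrib]
    refine Finset.sum_congr rfl fun i _ => ?_
    rw [← Finset.sum_add_distrib, ← Finset.sum_add_distrib]
    refine Finset.sum_congr rfl fun j _ => ?_
    ring
  have hgoal : (inner ℂ (ψ t) (WithLp.toLp 2 ((entryDeriv H t).mulVec (ψ t)) : EuclideanSpace ℂ (Fin d)) : ℂ)
      = ∑ i, ∑ j, (starRingEnd ℂ) (ψ t i) * H' i j * ψ t j := by
    rw [PiLp.inner_apply]
    refine Finset.sum_congr rfl fun i _ => ?_
    simp [RCLike.inner_apply, Matrix.mulVec, dotProduct, Finset.mul_sum, mul_assoc, hH'def]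
    rw [Finset.sum_mul]; exact Finset.sum_congr rfl fun _ _ => mul_comm _ _
  rw [hgoal, hkey, hsplit, hA, hB]
  have : (∑ i, (starRingEnd ℂ) (ψ' i) * ψ t i) + ∑ j, (starRingEnd ℂ) (ψ t j) * ψ' j = 0 := by
    rw [← hzero, Finset.sum_add_distrib]
  linear_combination ((lam t : ℝ) : ℂ) * this
end

section
/- Let d ∈ ℕ, let A be a fixed Hermitian d×d complex matrix, and for w ∈ ℝ^d set H(w) = A + diag(w). Let ψ : ℝ^d → EuclideanSpace ℂ (Fin d) and lam : ℝ^d → ℝ be differentiable (Fréchet) with ‖ψ(w)‖ = 1 and H(w).mulVec (ψ w) = lam w • ψ w for every w. Then for every w and every direction u ∈ ℝ^d, the Fréchet derivative of lam at w applied to u equals Σ_{i} u_i · |ψ(w)_i|². (The electron density ρ(w)_i = |ψ(w)_i|² is the functional derivative of the eigenenergy with respect to the potential.) -/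
/-- The functional derivative of the eigenenergy with respect to the potential is
the electron density: the Fréchet derivative of the eigenvalue `lam` at `w` in
direction `u` equals `∑ i, u i * |ψ(w) i|²`. -/
theorem eigenvalue_fderiv_eq_density (d : ℕ) (A : Matrix (Fin d) (Fin d) ℂ)
    (hA : A.IsHermitian)
    (ψ : EuclideanSpace ℝ (Fin d) → EuclideanSpace ℂ (Fin d))
    (lam : EuclideanSpace ℝ (Fin d) → ℝ)
    (hψ : Differentiable ℝ ψ) (hlam : Differentiable ℝ lam)
    (hnorm : ∀ w, ‖ψ w‖ = 1)
    (heig : ∀ w, (A + Matrix.diagonal fun i => (w i : ℂ)).mulVec (ψ w) = lam w • ψ w)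
    (w u : EuclideanSpace ℝ (Fin d)) :
    fderiv ℝ lam w u = ∑ i, u i * ‖ψ w i‖ ^ 2 := by
  classical
  -- the matrix A as a continuous ℝ-linear map on EuclideanSpace ℂ
  set T : EuclideanSpace ℂ (Fin d) →L[ℝ] EuclideanSpace ℂ (Fin d) :=
    LinearMap.toContinuousLinearMap ((Matrix.toEuclideanLin A).restrictScalars ℝ) with hTdef
  have hT : ∀ x : EuclideanSpace ℂ (Fin d), T x = Matrix.toEuclideanLin A x := fun _ => rfl
  have hTc : ∀ (x : EuclideanSpace ℂ (Fin d)) (i : Fin d), T x i = A.mulVec x i := fun _ _ => rfl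
  -- the eigenvalue as explicit function Φ
  set Φ : EuclideanSpace ℝ (Fin d) → ℝ := fun x =>
    Complex.reCLM (inner (𝕜 := ℂ) (ψ x) (T (ψ x))) + ∑ i, x i * ‖ψ x i‖ ^ 2 with hΦdef
  have hlamΦ : lam = Φ := by
    funext x
    have h1 : (inner (𝕜 := ℂ) (ψ x) (WithLp.toLp 2 ((A + Matrix.diagonal fun i => ((x i : ℝ) : ℂ)).mulVec (ψ x))))
        = inner (𝕜 := ℂ) (ψ x) (lam x • ψ x) := by
        exact congrArg (fun y => inner (𝕜 := ℂ) (ψ x) (WithLp.toLp 2 y)) (heig x)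
    have h2 : (Complex.reCLM (inner (𝕜 := ℂ) (ψ x) (lam x • ψ x)) : ℝ) = lam x := by
      rw [RCLike.real_smul_eq_coe_smul (K := ℂ), inner_smul_right, inner_self_eq_norm_sq_to_K]
      simp [hnorm x]
    have h3 : (Complex.reCLM (inner (𝕜 := ℂ) (ψ x) (WithLp.toLp 2 ((A + Matrix.diagonal fun i => ((x i : ℝ) : ℂ)).mulVec (ψ x)))) : ℝ)
        = Complex.reCLM (inner (𝕜 := ℂ) (ψ x) (T (ψ x))) + ∑ i, x i * ‖ψ x i‖ ^ 2 := by
      simp only [PiLp.inner_apply, RCLike.inner_apply, WithLp.ofLp_toLp, Matrix.add_mulVec, Pi.add_apply,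
        Matrix.mulVec_diagonal, mul_add, add_mul, Finset.sum_add_distrib, map_add]
      congr 1
      simp only [map_sum]
      refine Finset.sum_congr rfl fun i _ => ?_
      simp [Complex.mul_re, Complex.sq_norm, Complex.normSq_apply]
      ring
    calc lam x = Complex.reCLM (inner (𝕜 := ℂ) (ψ x) (lam x • ψ x)) := h2.symm
      _ = Complex.reCLM (inner (𝕜 := ℂ) (ψ x) ((WithLp.toLp 2 ((A + Matrix.diagonal fun i => ((x i : ℝ) : ℂ)).mulVec (ψ x))))) := by
          exact (congrArg (fun y => Complex.reCLM (inner (𝕜 := ℂ) (ψ x) (WithLp.toLp 2 y))) (heig x)).symm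
      _ = _ := h3
  -- derivative data
  have hψ' : HasFDerivAt ψ (fderiv ℝ ψ w) w := (hψ w).hasFDerivAt
  set D := fderiv ℝ ψ w with hDdef
  set v : EuclideanSpace ℂ (Fin d) := D u with hvdef
  set P : Fin d → (EuclideanSpace ℝ (Fin d) →L[ℝ] ℂ) := fun i =>
    ((EuclideanSpace.proj i : EuclideanSpace ℂ (Fin d) →L[ℂ] ℂ).restrictScalars ℝ).comp D
    with hPdef
  have hproj : ∀ i : Fin d, HasFDerivAt (fun x => ψ x i) (P i) w := fun i =>
    (((EuclideanSpace.proj i : EuclideanSpace ℂ (Fin d) →L[ℂ] ℂ).restrictScalars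
      ℝ).hasFDerivAt).comp w hψ'
  have hPu : ∀ i, P i u = v i := fun i => rfl
  have hN : ∀ i : Fin d, HasFDerivAt (fun x => ‖ψ x i‖ ^ 2)
      (Complex.reCLM.comp ((fderivInnerCLM ℂ (ψ w i, ψ w i)).comp ((P i).prod (P i)))) w := by
    intro i
    have h2 := Complex.reCLM.hasFDerivAt.comp w ((hproj i).inner ℂ (hproj i))
    have hfn : (fun x => ‖ψ x i‖ ^ 2)
        = fun x => Complex.reCLM (inner (𝕜 := ℂ) (ψ x i) (ψ x i)) := by
      funext x
      simp [← inner_self_eq_norm_sq (𝕜 := ℂ), Complex.sq_norm, Complex.normSq_apply]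
    rw [hfn]
    exact h2
  have hxi : ∀ i : Fin d, HasFDerivAt (fun x : EuclideanSpace ℝ (Fin d) => x i)
      (EuclideanSpace.proj i : EuclideanSpace ℝ (Fin d) →L[ℝ] ℝ) w := fun i =>
    (EuclideanSpace.proj i : EuclideanSpace ℝ (Fin d) →L[ℝ] ℝ).hasFDerivAt
  have hΦ : HasFDerivAt Φ
      (Complex.reCLM.comp ((fderivInnerCLM ℂ (ψ w, T (ψ w))).comp (D.prod (T.comp D)))
        + ∑ i, (w i • (Complex.reCLM.comp
            ((fderivInnerCLM ℂ (ψ w i, ψ w i)).comp ((P i).prod (P i))))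
          + ‖ψ w i‖ ^ 2 • (EuclideanSpace.proj i : EuclideanSpace ℝ (Fin d) →L[ℝ] ℝ))) w := by
    rw [hΦdef]
    exact (Complex.reCLM.hasFDerivAt.comp w
        (hψ'.inner ℂ (T.hasFDerivAt.comp w hψ'))).add
      (HasFDerivAt.fun_sum fun i _ => (hxi i).mul (hN i))
  -- the norm constraint gives that the real part of ⟪ψ, v⟫ + ⟪v, ψ⟫ vanishes
  have hconst : HasFDerivAt (fun x => Complex.reCLM (inner (𝕜 := ℂ) (ψ x) (ψ x)))
      (Complex.reCLM.comp ((fderivInnerCLM ℂ (ψ w, ψ w)).comp (D.prod D))) w :=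
    Complex.reCLM.hasFDerivAt.comp w (hψ'.inner ℂ hψ')
  have hfun : (fun x => Complex.reCLM (inner (𝕜 := ℂ) (ψ x) (ψ x))) = fun _ => (1 : ℝ) := by
    funext x
    have h := inner_self_eq_norm_sq (𝕜 := ℂ) (ψ x)
    simp only [RCLike.re_to_complex] at h
    rw [show (Complex.reCLM (inner (𝕜 := ℂ) (ψ x) (ψ x)) : ℝ)
      = (inner (𝕜 := ℂ) (ψ x) (ψ x)).re from rfl, h, hnorm x]
    norm_num
  have hzero : (Complex.reCLM.comp ((fderivInnerCLM ℂ (ψ w, ψ w)).comp (D.prod D)))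
      = (0 : EuclideanSpace ℝ (Fin d) →L[ℝ] ℝ) := by
    rw [hfun] at hconst
    exact hconst.unique (hasFDerivAt_const 1 w)
  have hkey : (inner (𝕜 := ℂ) (ψ w) v + inner (𝕜 := ℂ) v (ψ w)).re = 0 := by
    have := congrArg (fun L : EuclideanSpace ℝ (Fin d) →L[ℝ] ℝ => L u) hzero
    simpa [hvdef] using this
  -- Hermitian structure
  have hHherm : (A + Matrix.diagonal fun i => ((w i : ℝ) : ℂ)).IsHermitian := by
    refine hA.add (Matrix.isHermitian_diagonal_iff.2 fun i => ?_)
    show star _ = _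
    simp [Complex.star_def, Complex.conj_ofReal]
  have hsymm := Matrix.isHermitian_iff_isSymmetric.1 hHherm
  have hHc : ∀ (x : EuclideanSpace ℂ (Fin d)) (i : Fin d),
      Matrix.toEuclideanLin (A + Matrix.diagonal fun j => ((w j : ℝ) : ℂ)) x i
        = T x i + ((w i : ℝ) : ℂ) * x i := by
    intro x i
    show ((A + Matrix.diagonal fun j => ((w j : ℝ) : ℂ)).mulVec x) i = (A.mulVec x) i + _
    simp [Matrix.add_mulVec, Matrix.mulVec_diagonal]
  have hinner_exp : ∀ a b : EuclideanSpace ℂ (Fin d),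
      inner (𝕜 := ℂ) a (Matrix.toEuclideanLin (A + Matrix.diagonal fun j => ((w j : ℝ) : ℂ)) b)
        = inner (𝕜 := ℂ) a (T b)
          + ∑ i, ((w i : ℝ) : ℂ) * ((starRingEnd ℂ) (a i) * b i) := by
    intro a b
    simp only [PiLp.inner_apply, RCLike.inner_apply, hHc, mul_add, Finset.sum_add_distrib]
    congr 1
    rw [← Finset.sum_add_distrib]
    exact Finset.sum_congr rfl fun i _ => by ring
  have heigE : Matrix.toEuclideanLin (A + Matrix.diagonal fun j => ((w j : ℝ) : ℂ)) (ψ w)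
      = lam w • ψ w := by have := congrArg (WithLp.toLp 2) (heig w); exact this
  have hcross : (inner (𝕜 := ℂ) (ψ w) (T v) + inner (𝕜 := ℂ) v (T (ψ w))
      + ∑ i, ((w i : ℝ) : ℂ)
        * ((starRingEnd ℂ) (ψ w i) * v i + (starRingEnd ℂ) (v i) * ψ w i)).re = 0 := by
    have hsplit : inner (𝕜 := ℂ) (ψ w) (T v) + inner (𝕜 := ℂ) v (T (ψ w))
        + ∑ i, ((w i : ℝ) : ℂ)
          * ((starRingEnd ℂ) (ψ w i) * v i + (starRingEnd ℂ) (v i) * ψ w i)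
        = inner (𝕜 := ℂ) (ψ w)
            (Matrix.toEuclideanLin (A + Matrix.diagonal fun j => ((w j : ℝ) : ℂ)) v)
          + inner (𝕜 := ℂ) v
            (Matrix.toEuclideanLin (A + Matrix.diagonal fun j => ((w j : ℝ) : ℂ)) (ψ w)) := by
      rw [hinner_exp (ψ w) v, hinner_exp v (ψ w)]
      simp only [mul_add, Finset.sum_add_distrib]
      ring
    rw [hsplit, ← hsymm (ψ w) v, heigE, RCLike.real_smul_eq_coe_smul (K := ℂ),
      inner_smul_left, inner_smul_right, RCLike.conj_ofReal, ← mul_add]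
    rw [Complex.mul_re, hkey]
    simp
  -- final assembly
  rw [hlamΦ, hΦ.fderiv]
  simp only [ContinuousLinearMap.add_apply, ContinuousLinearMap.coe_comp', Function.comp_apply,
    ContinuousLinearMap.coe_sum', Finset.sum_apply, ContinuousLinearMap.smul_apply,
    ContinuousLinearMap.prod_apply, fderivInnerCLM_apply, Complex.reCLM_apply,
    smul_eq_mul, hPu, RCLike.inner_apply]
  have hproje : ∀ i : Fin d, (EuclideanSpace.proj i : EuclideanSpace ℝ (Fin d) →L[ℝ] ℝ) u = u i :=
    fun _ => rfl
  simp only [hproje, ← hvdef]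
  have hsum_split : ∑ x, (w x * (v x * (starRingEnd ℂ) (ψ w x)
        + ψ w x * (starRingEnd ℂ) (v x)).re + ‖ψ w x‖ ^ 2 * u x)
      = (∑ x, ((w x : ℝ) : ℂ) * ((starRingEnd ℂ) (ψ w x) * v x
          + (starRingEnd ℂ) (v x) * ψ w x)).re + ∑ x, u x * ‖ψ w x‖ ^ 2 := by
    rw [Complex.re_sum, Finset.sum_add_distrib]
    congr 1
    · exact Finset.sum_congr rfl fun i _ => by rw [← Complex.re_ofReal_mul]; congr 1; ring
    · exact Finset.sum_congr rfl fun i _ => mul_comm _ _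
  rw [hsum_split, ← add_assoc, ← Complex.add_re, hcross, zero_add]
end

section
/- Let d ∈ ℕ, let A be a fixed Hermitian d×d complex matrix, and for w ∈ ℝ^d set H(w) = A + diag(w). Let ψ : ℝ^d → EuclideanSpace ℂ (Fin d) and lam : ℝ^d → ℝ be differentiable with ‖ψ(w)‖ = 1 and H(w).mulVec (ψ w) = lam w • ψ w for every w. Fix v ∈ ℝ^d and define E_v : ℝ^d → ℝ by E_v(w) = Re ⟪ψ(w), (A + diag(v)).mulVec (ψ w)⟫, and define the density map ρ : ℝ^d → ℝ^d by ρ(w)_i = |ψ(w)_i|². Then for every w and every u ∈ ℝ^d, the Fréchet derivative of E_v at w applied to u equals Σ_i (v_i − w_i) · (fderiv ρ at w applied to u)_i. (Equation (3): δE_v[n,w] = ∬ (v(r) − w(r)) (δρ_{n,w}(r)/δw(r')) δw(r') dr dr'.) -/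
open scoped ComplexConjugate

/-- Equation (3) of the paper: the first-order variation of the excited-state
potential functional `E_v(w) = Re ⟪ψ(w), (A + diag v) ψ(w)⟫` in direction `u`
equals `∑ i (v i - w i) * (δρ/δw · u) i`, where `ρ(w) i = |ψ(w) i|²`. -/
theorem potential_functional_variation (d : ℕ) (A : Matrix (Fin d) (Fin d) ℂ)
    (hA : A.IsHermitian)
    (ψ : EuclideanSpace ℝ (Fin d) → EuclideanSpace ℂ (Fin d))
    (lam : EuclideanSpace ℝ (Fin d) → ℝ)
    (hψ : Differentiable ℝ ψ) (hlam : Differentiable ℝ lam)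
    (hnorm : ∀ w, ‖ψ w‖ = 1)
    (heig : ∀ w, (A + Matrix.diagonal fun i => (w i : ℂ)).mulVec (ψ w) = lam w • ψ w)
    (v : EuclideanSpace ℝ (Fin d)) (w u : EuclideanSpace ℝ (Fin d)) :
    fderiv ℝ (fun w' => (inner ℂ (ψ w')
        (WithLp.toLp 2 ((A + Matrix.diagonal fun i => (v i : ℂ)).mulVec (ψ w')) :
          EuclideanSpace ℂ (Fin d)) : ℂ).re) w u =
      ∑ i, (v i - w i) *
        fderiv ℝ (fun w' => (show EuclideanSpace ℝ (Fin d) from WithLp.toLp 2 (fun i => ‖ψ w' i‖ ^ 2))) w u i := by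
  classical
  set M : Matrix (Fin d) (Fin d) ℂ := A + Matrix.diagonal fun i => (v i : ℂ) with hMdef
  have hMH : M.IsHermitian := by
    refine hA.add (Matrix.isHermitian_diagonal_of_self_adjoint _ ?_)
    funext i
    exact Complex.conj_ofReal _
  set Φ : EuclideanSpace ℂ (Fin d) →L[ℝ] EuclideanSpace ℂ (Fin d) :=
    LinearMap.toContinuousLinearMap ((Matrix.toEuclideanLin M).restrictScalars ℝ) with hΦdef
  have hΦapp : ∀ x : EuclideanSpace ℂ (Fin d),
      Φ x = (WithLp.toLp 2 (M.mulVec x) : EuclideanSpace ℂ (Fin d)) := fun _ => rfl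
  have hsymm : ∀ x y : EuclideanSpace ℂ (Fin d),
      (inner ℂ (Φ x) y : ℂ) = inner ℂ x (Φ y) := fun x y =>
    (Matrix.isHermitian_iff_isSymmetric.1 hMH) x y
  have hψd : ∀ x, HasFDerivAt ψ (fderiv ℝ ψ x) x := fun x => (hψ x).hasFDerivAt
  set ψ' : EuclideanSpace ℝ (Fin d) →L[ℝ] EuclideanSpace ℂ (Fin d) := fderiv ℝ ψ w with hψ'def
  -- derivative of the functional
  have hE : HasFDerivAt (fun w' => (inner ℂ (ψ w') (Φ (ψ w')) : ℂ).re)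
      (Complex.reCLM.comp ((fderivInnerCLM ℂ (ψ w, Φ (ψ w))).comp (ψ'.prod (Φ.comp ψ')))) w :=
    Complex.reCLM.hasFDerivAt.comp w ((hψd w).inner ℂ (Φ.hasFDerivAt.comp w (hψd w)))
  -- the normalization constraint
  have hC : HasFDerivAt (fun w' => (inner ℂ (ψ w') (ψ w') : ℂ).re)
      (Complex.reCLM.comp ((fderivInnerCLM ℂ (ψ w, ψ w)).comp (ψ'.prod ψ'))) w :=
    Complex.reCLM.hasFDerivAt.comp w ((hψd w).inner ℂ (hψd w))
  have hconst : (fun w' => (inner ℂ (ψ w') (ψ w') : ℂ).re)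
      = fun _ : EuclideanSpace ℝ (Fin d) => (1 : ℝ) := by
    funext w'
    rw [inner_self_eq_norm_sq_to_K, hnorm]
    norm_num
  rw [hconst] at hC
  have hzero : (Complex.reCLM.comp ((fderivInnerCLM ℂ (ψ w, ψ w)).comp (ψ'.prod ψ'))) = 0 :=
    hC.unique (hasFDerivAt_const 1 w)
  have hre0 : (inner ℂ (ψ w) (ψ' u) : ℂ).re = 0 := by
    have h1 := congrArg (fun T : EuclideanSpace ℝ (Fin d) →L[ℝ] ℝ => T u) hzero
    simp only [ContinuousLinearMap.comp_apply, ContinuousLinearMap.prod_apply,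
      fderivInnerCLM_apply, Complex.reCLM_apply, ContinuousLinearMap.zero_apply] at h1
    simp only [Complex.add_re, Complex.conj_re] at h1
    have h2 : (inner ℂ (ψ w) (ψ' u) : ℂ) = conj (inner ℂ (ψ' u) (ψ w) : ℂ) :=
      (inner_conj_symm _ _).symm
    have h3 : (inner ℂ (ψ' u) (ψ w) : ℂ).re = (inner ℂ (ψ w) (ψ' u) : ℂ).re := by
      rw [h2, Complex.conj_re]
    linarith
  -- derivative of the density components
  set q : Fin d → (EuclideanSpace ℂ (Fin d) →L[ℝ] ℂ) :=
    fun i => (EuclideanSpace.proj (𝕜 := ℂ) i).restrictScalars ℝ with hqdef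
  set r : Fin d → (EuclideanSpace ℝ (Fin d) →L[ℝ] ℝ) := fun i =>
    Complex.reCLM.comp ((fderivInnerCLM ℂ (ψ w i, ψ w i)).comp
      (((q i).comp ψ').prod ((q i).comp ψ'))) with hrdef
  have hri : ∀ i, HasFDerivAt (fun w' => ‖ψ w' i‖ ^ 2) (r i) w := by
    intro i
    have h1 : HasFDerivAt (fun w' => (inner ℂ (ψ w' i) (ψ w' i) : ℂ).re) (r i) w :=
      Complex.reCLM.hasFDerivAt.comp w
        (((q i).hasFDerivAt.comp w (hψd w)).inner ℂ ((q i).hasFDerivAt.comp w (hψd w)))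
    have h2 : (fun w' : EuclideanSpace ℝ (Fin d) => (inner ℂ (ψ w' i) (ψ w' i) : ℂ).re)
        = fun w' => ‖ψ w' i‖ ^ 2 := by
      funext w'
      rw [inner_self_eq_norm_sq_to_K]
      norm_cast
    rwa [h2] at h1
  set R : EuclideanSpace ℝ (Fin d) →L[ℝ] EuclideanSpace ℝ (Fin d) :=
    ((PiLp.continuousLinearEquiv 2 ℝ (fun _ : Fin d => ℝ)).symm.toContinuousLinearMap).comp
      (ContinuousLinearMap.pi r) with hRdef
  have hρ : HasFDerivAt
      (fun w' => (show EuclideanSpace ℝ (Fin d) from WithLp.toLp 2 (fun i => ‖ψ w' i‖ ^ 2))) R w :=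
    ((PiLp.continuousLinearEquiv 2 ℝ (fun _ : Fin d => ℝ)).symm.toContinuousLinearMap.hasFDerivAt).comp
      w (hasFDerivAt_pi.2 hri)
  simp only [← hΦapp]
  rw [hE.fderiv, hρ.fderiv]
  -- now pure algebra
  simp only [hRdef, ContinuousLinearMap.comp_apply, ContinuousLinearMap.prod_apply,
    fderivInnerCLM_apply, Complex.reCLM_apply, ContinuousLinearMap.pi_apply, hrdef,
    ContinuousLinearEquiv.coe_coe, PiLp.continuousLinearEquiv_symm_apply]
  -- symmetry of Φ and conjugate pairing: LHS = 2 Re ⟪Φ (ψ w), ψ' u⟫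
  rw [← hsymm (ψ w) (ψ' u)]
  have hba : (inner ℂ (ψ' u) (Φ (ψ w)) : ℂ) = conj (inner ℂ (Φ (ψ w)) (ψ' u) : ℂ) :=
    (inner_conj_symm _ _).symm
  rw [hba, Complex.add_conj, Complex.ofReal_re]
  -- split M as (A + diag w) + diag (v - w) and use the eigen-equation
  have hsplit : M = (A + Matrix.diagonal fun i => ((w i : ℝ) : ℂ))
      + Matrix.diagonal (fun i => ((v i - w i : ℝ) : ℂ)) := by
    rw [hMdef, add_assoc, Matrix.diagonal_add]
    congr 1
    funext i
    push_cast
    ring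
  have hΦa : Φ (ψ w) = lam w • ψ w
      + (show EuclideanSpace ℂ (Fin d) from WithLp.toLp 2
          ((Matrix.diagonal fun i => ((v i - w i : ℝ) : ℂ)).mulVec (ψ w))) := by
    rw [hΦapp, hsplit, Matrix.add_mulVec, heig w]
    rfl
  rw [hΦa, inner_add_left]
  have hsm : (lam w • ψ w : EuclideanSpace ℂ (Fin d)) = ((lam w : ℂ) • ψ w) :=
    RCLike.real_smul_eq_coe_smul (lam w) (ψ w)
  rw [hsm, inner_smul_left, Complex.conj_ofReal]
  rw [Complex.add_re, Complex.re_ofReal_mul, hre0, mul_zero, zero_add]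
  -- expand inner products componentwise
  rw [PiLp.inner_apply, Complex.re_sum, Finset.mul_sum]
  refine Finset.sum_congr rfl fun i _ => ?_
  simp only [RCLike.inner_apply, Matrix.mulVec_diagonal, map_mul, Complex.conj_ofReal]
  simp only [hqdef, PiLp.toLp_apply, ContinuousLinearMap.pi_apply,
    ContinuousLinearMap.comp_apply, ContinuousLinearMap.prod_apply, Complex.reCLM_apply,
    fderivInnerCLM_apply, ContinuousLinearMap.coe_restrictScalars', PiLp.proj_apply,
    RCLike.inner_apply]
  simp only [Complex.add_re, Complex.mul_re, Complex.mul_im, Complex.conj_re,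
    Complex.conj_im, Complex.ofReal_re, Complex.ofReal_im]
  ring
end

section
/- (Theorem 1) Let d ∈ ℕ, let A be a fixed Hermitian d×d complex matrix, and for w ∈ ℝ^d set H(w) = A + diag(w). Let ψ : ℝ^d → EuclideanSpace ℂ (Fin d) and lam : ℝ^d → ℝ be differentiable with ‖ψ(w)‖ = 1 and H(w).mulVec (ψ w) = lam w • ψ w for every w. Fix v ∈ ℝ^d and define E_v(w) = Re ⟪ψ(w), (A + diag(v)).mulVec (ψ w)⟫. If w₀ ∈ ℝ^d is such that v − w₀ is a constant vector (v_i − (w₀)_i = c for all i, for some c ∈ ℝ), then the Fréchet derivative of E_v at w₀ is the zero linear map: E_v is stationary at w₀. -/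
/-- Theorem 1 of the paper: the excited-state potential functional
`E_v(w) = Re ⟪ψ(w), (A + diag v) ψ(w)⟫` is stationary at `w₀` whenever the trial
potential `w₀` differs from the physical potential `v` by at most a constant. -/
theorem potential_functional_stationary (d : ℕ) (A : Matrix (Fin d) (Fin d) ℂ)
    (hA : A.IsHermitian)
    (ψ : EuclideanSpace ℝ (Fin d) → EuclideanSpace ℂ (Fin d))
    (lam : EuclideanSpace ℝ (Fin d) → ℝ)
    (hψ : Differentiable ℝ ψ) (hlam : Differentiable ℝ lam)
    (hnorm : ∀ w, ‖ψ w‖ = 1)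
    (heig : ∀ w, (A + Matrix.diagonal fun i => (w i : ℂ)).mulVec (ψ w) = lam w • ψ w)
    (v w₀ : EuclideanSpace ℝ (Fin d))
    (hconst : ∃ c : ℝ, ∀ i, v i - w₀ i = c) :
    fderiv ℝ (fun w' => (inner ℂ (ψ w')
        (WithLp.toLp 2 ((A + Matrix.diagonal fun i => (v i : ℂ)).mulVec (ψ w')) :
          EuclideanSpace ℂ (Fin d)) : ℂ).re) w₀ = 0 := by
  classical
  obtain ⟨c, hc⟩ := hconst
  set M : Matrix (Fin d) (Fin d) ℂ := A + Matrix.diagonal fun i => (v i : ℂ) with hM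
  have hMherm : M.IsHermitian := by
    refine hA.add ?_
    refine Matrix.isHermitian_diagonal_of_self_adjoint _ ?_
    funext i
    simp [Pi.star_apply, Complex.conj_ofReal]
  have hsym := Matrix.isHermitian_iff_isSymmetric.mp hMherm
  -- the multiplication map as a continuous linear map
  set T : EuclideanSpace ℂ (Fin d) →L[ℂ] EuclideanSpace ℂ (Fin d) :=
    LinearMap.toContinuousLinearMap (Matrix.toEuclideanLin M) with hT
  have hTapp : ∀ x : EuclideanSpace ℂ (Fin d), T x = (WithLp.toLp 2 (M.mulVec x) : EuclideanSpace ℂ (Fin d)) :=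
    fun x => rfl
  -- eigenvalue equation at `w₀` for the shifted matrix
  have hTψ : T (ψ w₀) = ((lam w₀ + c : ℝ) : ℂ) • ψ w₀ := by
    have hdiag : (Matrix.diagonal fun i => (v i : ℂ)) =
        (Matrix.diagonal fun i => (w₀ i : ℂ)) + Matrix.diagonal (fun _ => (c : ℂ)) := by
      rw [Matrix.diagonal_add]
      refine congrArg Matrix.diagonal (funext fun i => ?_)
      rw [← hc i]
      push_cast
      ring
    have h1 : M.mulVec (ψ w₀) = (A + Matrix.diagonal fun i => (w₀ i : ℂ)).mulVec (ψ w₀)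
        + (Matrix.diagonal fun _ : Fin d => (c : ℂ)).mulVec (ψ w₀) := by
      rw [hM, hdiag, ← Matrix.add_mulVec, add_assoc]
    have h2 : (Matrix.diagonal fun _ : Fin d => (c : ℂ)).mulVec (ψ w₀) = (c : ℂ) • (ψ w₀) := by
      funext i
      simp [Matrix.mulVec_diagonal]
    rw [hTapp, h1, heig w₀, h2]
    show lam w₀ • ψ w₀ + (c : ℂ) • ψ w₀ = _
    rw [← Complex.coe_smul]
    push_cast
    rw [← add_smul]
  set r : ℝ := lam w₀ + c with hr
  set ψ' : EuclideanSpace ℝ (Fin d) →L[ℝ] EuclideanSpace ℂ (Fin d) := fderiv ℝ ψ w₀ with hψ'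
  have hφdiff : Differentiable ℝ fun w => T (ψ w) :=
    (T.restrictScalars ℝ).differentiable.comp hψ
  have hφderiv : fderiv ℝ (fun w => T (ψ w)) w₀ = (T.restrictScalars ℝ).comp ψ' := by
    have h := fderiv_comp (𝕜 := ℝ) w₀ ((T.restrictScalars ℝ).differentiableAt) (hψ w₀)
    rw [(T.restrictScalars ℝ).fderiv] at h
    exact h
  -- derivative of the squared norm is zero
  have hz : ∀ u, ((inner ℂ (ψ w₀) (ψ' u) : ℂ)).re = 0 := by
    intro u
    have hconstfun : (fun w => ((inner ℂ (ψ w) (ψ w) : ℂ)).re) = fun _ => (1 : ℝ) := by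
      funext w
      have h1 : ((inner ℂ (ψ w) (ψ w) : ℂ)).re = ‖ψ w‖ ^ 2 := by
        simpa [← RCLike.re_to_complex] using inner_self_eq_norm_sq (𝕜 := ℂ) (ψ w)
      rw [h1, hnorm w, one_pow]
    have hF : DifferentiableAt ℝ (fun w => (inner ℂ (ψ w) (ψ w) : ℂ)) w₀ :=
      (hψ w₀).inner ℂ (hψ w₀)
    have hre : fderiv ℝ (fun w => ((inner ℂ (ψ w) (ψ w) : ℂ)).re) w₀ u
        = (fderiv ℝ (fun w => (inner ℂ (ψ w) (ψ w) : ℂ)) w₀ u).re := by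
      have := (Complex.reCLM.hasFDerivAt.comp w₀ hF.hasFDerivAt).fderiv
      rw [show (fun w => ((inner ℂ (ψ w) (ψ w) : ℂ)).re)
          = Complex.reCLM ∘ (fun w => (inner ℂ (ψ w) (ψ w) : ℂ)) from rfl, this]
      rfl
    have h0 : fderiv ℝ (fun w => ((inner ℂ (ψ w) (ψ w) : ℂ)).re) w₀ u = 0 := by
      rw [hconstfun]; simp
    rw [hre, fderiv_inner_apply (𝕜 := ℂ) (hψ w₀) (hψ w₀) u, Complex.add_re] at h0
    have h2 : ((inner ℂ ((fderiv ℝ ψ w₀) u) (ψ w₀) : ℂ)).re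
        = ((inner ℂ (ψ w₀) ((fderiv ℝ ψ w₀) u) : ℂ)).re := by
      rw [← inner_conj_symm (𝕜 := ℂ) (ψ w₀) ((fderiv ℝ ψ w₀) u), Complex.conj_re]
    rw [h2] at h0
    have h3 : ((inner ℂ (ψ w₀) ((fderiv ℝ ψ w₀) u) : ℂ)).re = 0 := by linarith
    exact h3
  -- main computation
  refine ContinuousLinearMap.ext fun u => ?_
  have hF : DifferentiableAt ℝ (fun w => (inner ℂ (ψ w) (T (ψ w)) : ℂ)) w₀ :=
    (hψ w₀).inner ℂ (hφdiff w₀)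
  have hre : fderiv ℝ (fun w => ((inner ℂ (ψ w) (T (ψ w)) : ℂ)).re) w₀ u
      = (fderiv ℝ (fun w => (inner ℂ (ψ w) (T (ψ w)) : ℂ)) w₀ u).re := by
    have := (Complex.reCLM.hasFDerivAt.comp w₀ hF.hasFDerivAt).fderiv
    rw [show (fun w => ((inner ℂ (ψ w) (T (ψ w)) : ℂ)).re)
        = Complex.reCLM ∘ (fun w => (inner ℂ (ψ w) (T (ψ w)) : ℂ)) from rfl, this]
    rfl
  have hgoalfun : (fun w' => ((inner ℂ (ψ w')
        (WithLp.toLp 2 ((A + Matrix.diagonal fun i => (v i : ℂ)).mulVec (ψ w')) :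
          EuclideanSpace ℂ (Fin d)) : ℂ)).re)
      = fun w => ((inner ℂ (ψ w) (T (ψ w)) : ℂ)).re := by
    funext w
    rw [hTapp]
  rw [hgoalfun, ContinuousLinearMap.zero_apply, hre,
    fderiv_inner_apply (𝕜 := ℂ) (hψ w₀) (hφdiff w₀) u, hφderiv]
  have hsymuse : (inner ℂ (ψ w₀) (T (ψ' u)) : ℂ) = (inner ℂ (T (ψ w₀)) (ψ' u) : ℂ) :=
    (hsym (ψ w₀) (ψ' u)).symm
  have e1 : (inner ℂ (ψ w₀) (T (ψ' u)) : ℂ) = (r : ℂ) * (inner ℂ (ψ w₀) (ψ' u) : ℂ) := by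
    rw [hsymuse, hTψ, inner_smul_left, Complex.conj_ofReal]
  have e2 : (inner ℂ (ψ' u) (T (ψ w₀)) : ℂ)
      = (r : ℂ) * starRingEnd ℂ ((inner ℂ (ψ w₀) (ψ' u) : ℂ)) := by
    rw [hTψ, inner_smul_right]
    congr 1
    exact (inner_conj_symm (𝕜 := ℂ) (ψ' u) (ψ w₀)).symm
  simp only [ContinuousLinearMap.coe_comp', Function.comp_apply,
    ContinuousLinearMap.coe_restrictScalars']
  rw [show ((fderiv ℝ ψ w₀) : _) = (ψ' : _) from rfl]
  rw [e1, e2]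
  have hz0 := hz u
  rw [Complex.add_re, Complex.mul_re, Complex.mul_re, Complex.conj_re, Complex.conj_im,
    Complex.ofReal_re, Complex.ofReal_im, hz0]
  ring
end

section
/- (Converse of Theorem 1) Let d ∈ ℕ, let A be a Hermitian d×d complex matrix, and let ψ : ℝ^d → EuclideanSpace ℂ (Fin d), lam : ℝ^d → ℝ be differentiable with ‖ψ(w)‖ = 1 and (A + diag(w)).mulVec (ψ w) = lam w • ψ w for every w. Fix v ∈ ℝ^d, define E_v(w) = Re ⟪ψ(w), (A + diag(v)).mulVec (ψ w)⟫ and the density map ρ(w)_i = |ψ(w)_i|². Let w₀ ∈ ℝ^d and suppose that every x ∈ ℝ^d that is Euclidean-orthogonal to the range of the linear response map u ↦ fderiv ρ at w₀ applied to u is a real multiple of 𝟙 = (1,…,1). If the Fréchet derivative of E_v at w₀ is zero, then v − w₀ is a constant vector. -/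
open scoped InnerProductSpace ComplexConjugate


/-- Converse of Theorem 1: assuming the nondegeneracy condition that the only
vectors orthogonal to the range of the linear density-response map `u ↦ δρ/δw · u`
are the constant vectors, stationarity of `E_v` at `w₀` implies that `v - w₀` is
a constant vector. -/
theorem potential_functional_stationary_converse (d : ℕ) (A : Matrix (Fin d) (Fin d) ℂ)
    (hA : A.IsHermitian)
    (ψ : EuclideanSpace ℝ (Fin d) → EuclideanSpace ℂ (Fin d))
    (lam : EuclideanSpace ℝ (Fin d) → ℝ)
    (hψ : Differentiable ℝ ψ) (hlam : Differentiable ℝ lam)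
    (hnorm : ∀ w, ‖ψ w‖ = 1)
    (heig : ∀ w, (A + Matrix.diagonal fun i => (w i : ℂ)).mulVec (ψ w) = lam w • ψ w)
    (v w₀ : EuclideanSpace ℝ (Fin d))
    (hnondeg : ∀ x : EuclideanSpace ℝ (Fin d),
      (∀ u : EuclideanSpace ℝ (Fin d),
        (inner ℝ x (fderiv ℝ
          (fun w' => (show EuclideanSpace ℝ (Fin d) from WithLp.toLp 2 fun i => ‖ψ w' i‖ ^ 2)) w₀ u) : ℝ) = 0) →
      ∃ c : ℝ, ∀ i, x i = c)
    (hstat : fderiv ℝ (fun w' => (inner ℂ (ψ w')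
        (WithLp.toLp 2 ((A + Matrix.diagonal fun i => (v i : ℂ)).mulVec (ψ w')) :
          EuclideanSpace ℂ (Fin d)) : ℂ).re) w₀ = 0) :
    ∃ c : ℝ, ∀ i, v i - w₀ i = c := by
  classical
  set ρ : EuclideanSpace ℝ (Fin d) → EuclideanSpace ℝ (Fin d) :=
    fun w' => (show EuclideanSpace ℝ (Fin d) from WithLp.toLp 2 fun i => ‖ψ w' i‖ ^ 2) with hρdef
  set x : EuclideanSpace ℝ (Fin d) := v - w₀ with hxdef
  have hxi : ∀ i, x i = v i - w₀ i := fun i => rfl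
  -- differentiability of components of ψ and of ρ
  have hψi : ∀ i, Differentiable ℝ (fun w => ψ w i) := fun i =>
    ((EuclideanSpace.proj i : EuclideanSpace ℂ (Fin d) →L[ℂ] ℂ).restrictScalars
      ℝ).differentiable.comp hψ
  have hρdiff : Differentiable ℝ ρ := by
    have h1 : Differentiable ℝ (fun w => (fun i => ‖ψ w i‖ ^ 2 : Fin d → ℝ)) :=
      differentiable_pi.mpr fun i => ((hψi i).norm_sq (𝕜 := ℂ))
    exact ((PiLp.continuousLinearEquiv 2 ℝ (fun _ : Fin d => ℝ)).symm.differentiable).comp h1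
  -- the fixed Hamiltonian at w₀, as a continuous linear map
  set M : Matrix (Fin d) (Fin d) ℂ := A + Matrix.diagonal fun i => (w₀ i : ℂ) with hMdef
  set T : EuclideanSpace ℂ (Fin d) →L[ℂ] EuclideanSpace ℂ (Fin d) :=
    Matrix.toEuclideanCLM (𝕜 := ℂ) M with hTdef
  have hTapp : ∀ z : EuclideanSpace ℂ (Fin d), T z = WithLp.toLp 2 (M.mulVec z) := fun _ => rfl
  have hM : M.IsHermitian := hA.add (Matrix.isHermitian_diagonal_iff.mpr
    fun i => by simp [IsSelfAdjoint, Complex.conj_ofReal])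
  have hTsa : ContinuousLinearMap.adjoint T = T := by
    rw [← ContinuousLinearMap.star_eq_adjoint, hTdef, ← map_star, show star M = M from hM]
  have hTψ : T (ψ w₀) = (lam w₀ : ℂ) • ψ w₀ := by
    have h := heig w₀
    rw [← hMdef] at h
    rw [hTapp, h]
    ext i
    simp [Complex.real_smul]
  -- differentiability of the auxiliary functionals
  have hTψdiff : Differentiable ℝ (fun w => T (ψ w)) :=
    (T.restrictScalars ℝ).differentiable.comp hψ
  have hgdiff : Differentiable ℝ (fun w => (inner ℂ (ψ w) (T (ψ w)) : ℂ)) :=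
    hψ.inner ℂ hTψdiff
  -- derivative of the constant norm
  have h0 : ∀ u, (inner ℂ (ψ w₀) (fderiv ℝ ψ w₀ u) : ℂ)
      + inner ℂ (fderiv ℝ ψ w₀ u) (ψ w₀) = 0 := by
    intro u
    have hconst : (fun w => (inner ℂ (ψ w) (ψ w) : ℂ)) = fun _ => (1 : ℂ) := by
      funext w
      rw [inner_self_eq_norm_sq_to_K, hnorm w]
      norm_num
    have h1 := fderiv_inner_apply ℂ (hψ w₀) (hψ w₀) u
    rw [hconst] at h1
    simpa using h1.symm
  -- derivative of T ∘ ψ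
  have hTcomp : fderiv ℝ (fun w => T (ψ w)) w₀
      = (T.restrictScalars ℝ).comp (fderiv ℝ ψ w₀) :=
    ((T.restrictScalars ℝ).hasFDerivAt.comp w₀ (hψ w₀).hasFDerivAt).fderiv
  -- stationarity of F₀
  have hF0 : fderiv ℝ (fun w => (inner ℂ (ψ w) (T (ψ w)) : ℂ).re) w₀ = 0 := by
    have hre : HasFDerivAt (fun w => (inner ℂ (ψ w) (T (ψ w)) : ℂ).re)
        (Complex.reCLM.comp (fderiv ℝ (fun w => (inner ℂ (ψ w) (T (ψ w)) : ℂ)) w₀)) w₀ :=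
      Complex.reCLM.hasFDerivAt.comp w₀ (hgdiff w₀).hasFDerivAt
    rw [hre.fderiv]
    ext u
    have h2 := fderiv_inner_apply ℂ (hψ w₀) (hTψdiff w₀) u
    rw [hTcomp] at h2
    simp only [ContinuousLinearMap.coe_comp', Function.comp_apply,
      ContinuousLinearMap.coe_restrictScalars'] at h2
    have h3 : (inner ℂ (ψ w₀) (T (fderiv ℝ ψ w₀ u)) : ℂ)
        = inner ℂ (T (ψ w₀)) (fderiv ℝ ψ w₀ u) := by
      rw [← ContinuousLinearMap.adjoint_inner_left, hTsa]
    have h4 : (inner ℂ (T (ψ w₀)) (fderiv ℝ ψ w₀ u) : ℂ)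
        = (lam w₀ : ℂ) * inner ℂ (ψ w₀) (fderiv ℝ ψ w₀ u) := by
      rw [hTψ, inner_smul_left, Complex.conj_ofReal]
    have h5 : (inner ℂ (fderiv ℝ ψ w₀ u) (T (ψ w₀)) : ℂ)
        = (lam w₀ : ℂ) * inner ℂ (fderiv ℝ ψ w₀ u) (ψ w₀) := by
      rw [hTψ, inner_smul_right]
    rw [h3, h4, h5, ← mul_add, h0 u, mul_zero] at h2
    show ((fderiv ℝ (fun w => (inner ℂ (ψ w) (T (ψ w)) : ℂ)) w₀) u).re = 0
    rw [h2]
    rfl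
  -- the decomposition E_v = F₀ + ⟪x, ρ⟫
  have hterm : ∀ (r : ℝ) (z : ℂ), ((starRingEnd ℂ) z * ((r : ℂ) * z)).re = r * ‖z‖ ^ 2 := by
    intro r z
    have h : (starRingEnd ℂ) z * ((r : ℂ) * z) = ((r * ‖z‖ ^ 2 : ℝ) : ℂ) := by
      rw [mul_left_comm, RCLike.conj_mul]
      push_cast
      rfl
    rw [h, Complex.ofReal_re]
  have expand : ∀ (p : EuclideanSpace ℝ (Fin d)) (w : EuclideanSpace ℝ (Fin d)),
      ((inner ℂ (ψ w) (WithLp.toLp 2 ((A + Matrix.diagonal fun i => (p i : ℂ)).mulVec (ψ w)) :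
          EuclideanSpace ℂ (Fin d)) : ℂ)).re
      = (∑ i, ((starRingEnd ℂ) (ψ w i) * (A.mulVec (ψ w) i)).re)
        + ∑ i, p i * ‖ψ w i‖ ^ 2 := by
    intro p w
    simp only [PiLp.inner_apply, RCLike.inner_apply', Matrix.add_mulVec, Pi.add_apply,
      Matrix.mulVec_diagonal, mul_add, Finset.sum_add_distrib, Complex.add_re, Complex.re_sum]
    congr 1
    exact Finset.sum_congr rfl fun i _ => hterm (p i) (ψ w i)
  have hinnerxρ : ∀ w, (inner ℝ x (ρ w) : ℝ) = ∑ i, (v i - w₀ i) * ‖ψ w i‖ ^ 2 := by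
    intro w
    simp only [PiLp.inner_apply, RCLike.inner_apply', conj_trivial]
    exact Finset.sum_congr rfl fun i _ => rfl
  have hid : (fun w' => (inner ℂ (ψ w')
        (WithLp.toLp 2 ((A + Matrix.diagonal fun i => (v i : ℂ)).mulVec (ψ w')) :
          EuclideanSpace ℂ (Fin d)) : ℂ).re)
      = fun w' => (inner ℂ (ψ w') (T (ψ w')) : ℂ).re + (inner ℝ x (ρ w') : ℝ) := by
    funext w
    rw [expand v w, hTapp, hMdef, expand w₀ w, hinnerxρ w]
    rw [add_assoc]
    congr 1
    rw [← Finset.sum_add_distrib]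
    exact Finset.sum_congr rfl fun i _ => by ring
  -- conclude: the density response pairing with x vanishes
  have hkey : ∀ u, (inner ℝ x (fderiv ℝ ρ w₀ u) : ℝ) = 0 := by
    intro u
    have hstat' : fderiv ℝ (fun w' => (inner ℂ (ψ w') (T (ψ w')) : ℂ).re
        + (inner ℝ x (ρ w') : ℝ)) w₀ = 0 := by
      rw [← hid]; exact hstat
    have h1 : DifferentiableAt ℝ (fun w => (inner ℂ (ψ w) (T (ψ w)) : ℂ).re) w₀ :=
      Complex.reCLM.differentiable.comp hgdiff |>.differentiableAt
    have h2 : DifferentiableAt ℝ (fun w' => (inner ℝ x (ρ w') : ℝ)) w₀ :=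
      (differentiableAt_const x).inner ℝ (hρdiff w₀)
    have h3 := fderiv_add h1 h2
    rw [show ((fun w => (inner ℂ (ψ w) (T (ψ w)) : ℂ).re) + fun w' => (inner ℝ x (ρ w') : ℝ)) = fun w' => (inner ℂ (ψ w') (T (ψ w')) : ℂ).re + (inner ℝ x (ρ w') : ℝ) from rfl] at h3
    rw [hstat', hF0] at h3
    have h4 : fderiv ℝ (fun w' => (inner ℝ x (ρ w') : ℝ)) w₀ u = 0 := by
      have := congrArg (fun L => L u) h3.symm
      simpa using this
    rw [fderiv_inner_apply ℝ (differentiableAt_const x) (hρdiff w₀) u] at h4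
    simpa using h4
  obtain ⟨c, hc⟩ := hnondeg x hkey
  exact ⟨c, fun i => by rw [← hxi i]; exact hc i⟩
end

section
/- (Theorem 2, derivative formula) Let d ∈ ℕ, let A be a Hermitian d×d complex matrix, and let ψ : ℝ^d → EuclideanSpace ℂ (Fin d), lam : ℝ^d → ℝ be differentiable with ‖ψ(w)‖ = 1 and (A + diag(w)).mulVec (ψ w) = lam w • ψ w for every w. Let W : ℝ^d → ℝ^d be a differentiable map (the adiabatic-connection map from noninteracting potentials w_s to interacting potentials w = W(w_s)). Fix v ∈ ℝ^d and define E_v : ℝ^d → ℝ by E_v(w_s) = Re ⟪ψ(W(w_s)), (A + diag(v)).mulVec (ψ (W(w_s)))⟫, and ρ∘W : ℝ^d → ℝ^d by (ρ∘W)(w_s)_i = |ψ(W(w_s))_i|². Then for every w_s and every u ∈ ℝ^d, the Fréchet derivative of E_v at w_s applied to u equals Σ_i (v_i − W(w_s)_i) · (fderiv (ρ∘W) at w_s applied to u)_i. -/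
open scoped InnerProductSpace

/-- Theorem 2 of the paper, derivative formula: for the excited-state Kohn–Sham
functional `E_v(w_s) = Re ⟪ψ(W(w_s)), (A + diag v) ψ(W(w_s))⟫`, expressed through
the adiabatic-connection map `W`, the first-order variation in direction `u`
equals `∑ i (v i - W(w_s) i) * (δ(ρ∘W)/δw_s · u) i`. -/
theorem ks_potential_functional_variation (d : ℕ) (A : Matrix (Fin d) (Fin d) ℂ)
    (hA : A.IsHermitian)
    (ψ : EuclideanSpace ℝ (Fin d) → EuclideanSpace ℂ (Fin d))
    (lam : EuclideanSpace ℝ (Fin d) → ℝ)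
    (hψ : Differentiable ℝ ψ) (hlam : Differentiable ℝ lam)
    (hnorm : ∀ w, ‖ψ w‖ = 1)
    (heig : ∀ w, (A + Matrix.diagonal fun i => (w i : ℂ)).mulVec (ψ w) = lam w • ψ w)
    (W : EuclideanSpace ℝ (Fin d) → EuclideanSpace ℝ (Fin d))
    (hW : Differentiable ℝ W)
    (v : EuclideanSpace ℝ (Fin d)) (ws u : EuclideanSpace ℝ (Fin d)) :
    fderiv ℝ (fun ws' => (inner ℂ (ψ (W ws'))
        (WithLp.toLp 2 ((A + Matrix.diagonal fun i => (v i : ℂ)).mulVec (ψ (W ws'))) :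
          EuclideanSpace ℂ (Fin d)) : ℂ).re) ws u =
      ∑ i, (v i - W ws i) *
        fderiv ℝ (fun ws' =>
          (show EuclideanSpace ℝ (Fin d) from WithLp.toLp 2 fun i => ‖ψ (W ws') i‖ ^ 2)) ws u i := by
  classical
  set φ : EuclideanSpace ℝ (Fin d) → EuclideanSpace ℂ (Fin d) := fun ws' => ψ (W ws') with hφdef
  have hφ : Differentiable ℝ φ := hψ.comp hW
  set D : EuclideanSpace ℝ (Fin d) →L[ℝ] EuclideanSpace ℂ (Fin d) := fderiv ℝ φ ws with hD
  have HD : HasFDerivAt φ D ws := (hφ ws).hasFDerivAt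
  set p : EuclideanSpace ℂ (Fin d) := φ ws with hp
  set x : EuclideanSpace ℂ (Fin d) := D u with hx
  set M : Matrix (Fin d) (Fin d) ℂ := A + Matrix.diagonal (fun i => (v i : ℂ)) with hMdef
  -- M as a continuous linear map on Euclidean space
  set Mc : EuclideanSpace ℂ (Fin d) →L[ℂ] EuclideanSpace ℂ (Fin d) :=
    LinearMap.toContinuousLinearMap (Matrix.toEuclideanLin M) with hMcdef
  have hMc : ∀ y : EuclideanSpace ℂ (Fin d), Mc y = WithLp.toLp 2 (M.mulVec y) := fun y => rfl
  -- M is Hermitian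
  have hM : M.IsHermitian := by
    refine hA.add ?_
    refine Matrix.isHermitian_diagonal_iff.mpr fun i => ?_
    simpa [IsSelfAdjoint] using Complex.conj_ofReal (v i)
  -- derivative of Mc ∘ φ
  have hMcφ : HasFDerivAt (fun t => Mc (φ t)) (((Mc.restrictScalars ℝ)).comp D) ws :=
    (Mc.restrictScalars ℝ).hasFDerivAt.comp ws HD
  -- derivative of the inner product
  have hinnerM : HasFDerivAt (fun t => (inner ℂ (φ t) (Mc (φ t)) : ℂ))
      ((fderivInnerCLM ℂ (p, Mc p)).comp (D.prod ((Mc.restrictScalars ℝ).comp D))) ws :=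
    HD.inner ℂ hMcφ
  have hre : HasFDerivAt (fun t => (inner ℂ (φ t) (Mc (φ t)) : ℂ).re)
      (Complex.reCLM.comp ((fderivInnerCLM ℂ (p, Mc p)).comp
        (D.prod ((Mc.restrictScalars ℝ).comp D)))) ws :=
    Complex.reCLM.hasFDerivAt.comp ws hinnerM
  -- the function in the statement equals the one built from Mc
  have hfun : (fun ws' => (inner ℂ (ψ (W ws'))
        (WithLp.toLp 2 ((A + Matrix.diagonal fun i => (v i : ℂ)).mulVec (ψ (W ws'))) :
          EuclideanSpace ℂ (Fin d)) : ℂ).re)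
      = fun t => (inner ℂ (φ t) (Mc (φ t)) : ℂ).re := by
    funext t
    rw [hMc]
  have hLHS : fderiv ℝ (fun ws' => (inner ℂ (ψ (W ws'))
        (WithLp.toLp 2 ((A + Matrix.diagonal fun i => (v i : ℂ)).mulVec (ψ (W ws'))) :
          EuclideanSpace ℂ (Fin d)) : ℂ).re) ws u
      = ((inner ℂ p (Mc x) : ℂ) + (inner ℂ x (Mc p) : ℂ)).re := by
    rw [hfun, hre.fderiv]
    simp [fderivInnerCLM_apply]
    rfl
  -- orthogonality: re ⟪x, p⟫ = 0, from constancy of the norm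
  have hnormφ : ∀ t, ‖φ t‖ = 1 := fun t => hnorm (W t)
  have hxp : (inner ℂ x p : ℂ).re = 0 := by
    have hid : HasFDerivAt (fun t => (inner ℂ (φ t) (φ t) : ℂ))
        ((fderivInnerCLM ℂ (p, p)).comp (D.prod D)) ws := HD.inner ℂ HD
    have hre1 : HasFDerivAt (fun t => (inner ℂ (φ t) (φ t) : ℂ).re)
        (Complex.reCLM.comp ((fderivInnerCLM ℂ (p, p)).comp (D.prod D))) ws :=
      Complex.reCLM.hasFDerivAt.comp ws hid
    have hconst : (fun t => (inner ℂ (φ t) (φ t) : ℂ).re) = fun _ => (1 : ℝ) := by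
      funext t
      have := inner_self_eq_norm_sq (𝕜 := ℂ) (φ t)
      rw [hnormφ t] at this
      simpa using this
    rw [hconst] at hre1
    have h0 : (Complex.reCLM.comp ((fderivInnerCLM ℂ (p, p)).comp (D.prod D))) = 0 :=
      hre1.unique (hasFDerivAt_const 1 ws)
    have h0u := congrArg (fun L => L u) h0
    simp only [ContinuousLinearMap.coe_comp', Function.comp_apply,
      ContinuousLinearMap.prod_apply, fderivInnerCLM_apply, ContinuousLinearMap.zero_apply,
      Complex.reCLM_apply] at h0u
    have hsym : (inner ℂ p x : ℂ).re = (inner ℂ x p : ℂ).re := by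
      rw [← inner_conj_symm]
      exact Complex.conj_re _
    rw [Complex.add_re] at h0u
    linarith
  -- Hermitian symmetry: re ⟪p, Mc x⟫ = re ⟪x, Mc p⟫
  have hherm : (inner ℂ p (Mc x) : ℂ) = starRingEnd ℂ (inner ℂ x (Mc p) : ℂ) := by
    have key : ∀ a b : EuclideanSpace ℂ (Fin d),
        (inner ℂ a (Mc b) : ℂ) = dotProduct (star (a : Fin d → ℂ)) (M.mulVec b) := by
      intro a b
      rw [hMc]
      simp [PiLp.inner_apply, dotProduct, RCLike.inner_apply, mul_comm]
    rw [show starRingEnd ℂ (inner ℂ x (Mc p) : ℂ) = (inner ℂ (Mc p) x : ℂ) from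
      inner_conj_symm (Mc p) x]
    have h2 : (inner ℂ (Mc p) x : ℂ) = dotProduct (star (M.mulVec p)) (x : Fin d → ℂ) := by
      rw [show (Mc p : EuclideanSpace ℂ (Fin d)) = (WithLp.toLp 2 (M.mulVec p) : EuclideanSpace ℂ (Fin d)) from hMc p]
      simp [PiLp.inner_apply, dotProduct, RCLike.inner_apply, mul_comm]
    rw [key, h2, Matrix.dotProduct_mulVec, Matrix.star_mulVec, hM.eq]
  -- eigen decomposition of M.mulVec p
  have hMp : ∀ i, (M.mulVec p) i
      = (lam (W ws) : ℂ) * p i + ((v i - W ws i : ℝ) : ℂ) * p i := by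
    intro i
    have h1 : M = (A + Matrix.diagonal fun j => (W ws j : ℂ))
        + Matrix.diagonal (fun j => ((v j - W ws j : ℝ) : ℂ)) := by
      rw [hMdef, add_assoc, Matrix.diagonal_add]
      congr 2
      funext j
      push_cast
      ring
    rw [h1, Matrix.add_mulVec]
    have h2 := heig (W ws)
    rw [Pi.add_apply, h2, Matrix.mulVec_diagonal]
    rfl
  -- compute re ⟪x, Mc p⟫
  have hxMp : (inner ℂ x (Mc p) : ℂ).re
      = ∑ i, (v i - W ws i) * (starRingEnd ℂ (x i) * p i).re := by
    rw [hMc]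
    rw [show (inner ℂ x (WithLp.toLp 2 (M.mulVec p) : EuclideanSpace ℂ (Fin d)) : ℂ)
        = ∑ i, starRingEnd ℂ (x i) * ((M.mulVec p) i) from by
      simp [PiLp.inner_apply, RCLike.inner_apply, mul_comm]]
    have : ∀ i, starRingEnd ℂ (x i) * ((M.mulVec p) i)
        = (lam (W ws) : ℂ) * (starRingEnd ℂ (x i) * p i)
          + ((v i - W ws i : ℝ) : ℂ) * (starRingEnd ℂ (x i) * p i) := by
      intro i
      rw [hMp i]
      ring
    rw [Finset.sum_congr rfl fun i _ => this i]
    rw [Finset.sum_add_distrib, ← Finset.mul_sum]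
    rw [Complex.add_re]
    have hxpsum : (∑ i, starRingEnd ℂ (x i) * p i) = (inner ℂ x p : ℂ) := by
      simp [PiLp.inner_apply, RCLike.inner_apply, mul_comm]
    rw [hxpsum]
    rw [Complex.re_ofReal_mul, hxp, mul_zero, zero_add, Complex.re_sum]
    exact Finset.sum_congr rfl fun i _ => by rw [Complex.re_ofReal_mul]
  -- derivative of the density components
  have hcomp : ∀ i : Fin d, HasFDerivAt (fun t => φ t i)
      ((EuclideanSpace.proj i).restrictScalars ℝ |>.comp D) ws :=
    fun i => ((EuclideanSpace.proj (𝕜 := ℂ) i).restrictScalars ℝ).hasFDerivAt.comp ws HD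
  have hρi : ∀ i : Fin d, HasFDerivAt (fun t => ‖φ t i‖ ^ 2)
      (Complex.reCLM.comp ((fderivInnerCLM ℂ (p i, p i)).comp
        ((((EuclideanSpace.proj i).restrictScalars ℝ).comp D).prod
          (((EuclideanSpace.proj i).restrictScalars ℝ).comp D)))) ws := by
    intro i
    have h1 : HasFDerivAt (fun t => (inner ℂ (φ t i) (φ t i) : ℂ).re)
        (Complex.reCLM.comp ((fderivInnerCLM ℂ (p i, p i)).comp
          ((((EuclideanSpace.proj i).restrictScalars ℝ).comp D).prod
            (((EuclideanSpace.proj i).restrictScalars ℝ).comp D)))) ws :=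
      Complex.reCLM.hasFDerivAt.comp ws ((hcomp i).inner ℂ (hcomp i))
    have heq : (fun t => (inner ℂ (φ t i) (φ t i) : ℂ).re) = fun t => ‖φ t i‖ ^ 2 := by
      funext t
      have := inner_self_eq_norm_sq (𝕜 := ℂ) (φ t i)
      simpa using this
    rwa [heq] at h1
  -- derivative of the density map into EuclideanSpace
  have hρ : HasFDerivAt (fun t =>
        (show EuclideanSpace ℝ (Fin d) from WithLp.toLp 2 fun i => ‖ψ (W t) i‖ ^ 2))
      (((PiLp.continuousLinearEquiv 2 ℝ (fun _ : Fin d => ℝ)).symm :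
          (Fin d → ℝ) →L[ℝ] EuclideanSpace ℝ (Fin d)).comp
        (ContinuousLinearMap.pi fun i =>
          Complex.reCLM.comp ((fderivInnerCLM ℂ (p i, p i)).comp
            ((((EuclideanSpace.proj i).restrictScalars ℝ).comp D).prod
              (((EuclideanSpace.proj i).restrictScalars ℝ).comp D))))) ws := by
    have hg : HasFDerivAt (fun t => (fun i => ‖φ t i‖ ^ 2 : Fin d → ℝ))
        (ContinuousLinearMap.pi fun i =>
          Complex.reCLM.comp ((fderivInnerCLM ℂ (p i, p i)).comp
            ((((EuclideanSpace.proj i).restrictScalars ℝ).comp D).prod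
              (((EuclideanSpace.proj i).restrictScalars ℝ).comp D)))) ws :=
      hasFDerivAt_pi.mpr fun i => hρi i
    exact ((PiLp.continuousLinearEquiv 2 ℝ (fun _ : Fin d => ℝ)).symm :
        (Fin d → ℝ) →L[ℝ] EuclideanSpace ℝ (Fin d)).hasFDerivAt.comp ws hg
  have hRHS : ∀ i : Fin d, fderiv ℝ (fun ws' =>
        (show EuclideanSpace ℝ (Fin d) from WithLp.toLp 2 fun i => ‖ψ (W ws') i‖ ^ 2)) ws u i
      = 2 * (starRingEnd ℂ (x i) * p i).re := by
    intro i
    rw [hρ.fderiv]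
    simp only [ContinuousLinearMap.coe_comp', Function.comp_apply]
    have : ∀ y : Fin d → ℝ,
        ((PiLp.continuousLinearEquiv 2 ℝ (fun _ : Fin d => ℝ)).symm :
          (Fin d → ℝ) →L[ℝ] EuclideanSpace ℝ (Fin d)) y i = y i := fun _ => rfl
    rw [this]
    simp only [ContinuousLinearMap.pi_apply, ContinuousLinearMap.coe_comp',
      Function.comp_apply, ContinuousLinearMap.prod_apply, fderivInnerCLM_apply,
      Complex.reCLM_apply, ContinuousLinearMap.coe_restrictScalars']
    have hxi : (EuclideanSpace.proj (𝕜 := ℂ) i) (D u) = x i := rfl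
    rw [hxi]
    have : (inner ℂ (p i) (x i) : ℂ).re = (inner ℂ (x i) (p i) : ℂ).re := by
      rw [← inner_conj_symm]
      exact Complex.conj_re _
    rw [Complex.add_re, this]
    simp [RCLike.inner_apply]
    ring
  -- put everything together
  rw [hLHS]
  rw [Complex.add_re]
  have : (inner ℂ p (Mc x) : ℂ).re = (inner ℂ x (Mc p) : ℂ).re := by
    rw [hherm]
    exact Complex.conj_re _
  rw [this, hxMp, ← Finset.sum_add_distrib]
  refine Finset.sum_congr rfl fun i _ => ?_
  rw [hRHS i]
  ring
end

section
/- (Theorem 2, stationarity) Let d ∈ ℕ, let A be a Hermitian d×d complex matrix, and let ψ : ℝ^d → EuclideanSpace ℂ (Fin d), lam : ℝ^d → ℝ be differentiable with ‖ψ(w)‖ = 1 and (A + diag(w)).mulVec (ψ w) = lam w • ψ w for every w. Let W : ℝ^d → ℝ^d be differentiable, fix v ∈ ℝ^d, and define E_v(w_s) = Re ⟪ψ(W(w_s)), (A + diag(v)).mulVec (ψ (W(w_s)))⟫. If w_s⁰ ∈ ℝ^d is such that v − W(w_s⁰) is a constant vector (all components equal), then the Fréchet derivative of E_v at w_s⁰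 is the zero linear map: E_v is stationary with respect to variations of the trial noninteracting potential w_s when the mapped interacting potential W(w_s) equals the physical potential v up to a constant. -/
open scoped ComplexConjugate

lemma aux_stationary {d : ℕ} (T : EuclideanSpace ℂ (Fin d) →L[ℂ] EuclideanSpace ℂ (Fin d))
    (hT : ∀ x y : EuclideanSpace ℂ (Fin d), (inner ℂ (T x) y : ℂ) = inner ℂ x (T y))
    (ψ : EuclideanSpace ℝ (Fin d) → EuclideanSpace ℂ (Fin d))
    (hψ : Differentiable ℝ ψ) (hnorm : ∀ w, ‖ψ w‖ = 1)
    (w₀ : EuclideanSpace ℝ (Fin d)) (μ : ℝ) (heig : T (ψ w₀) = μ • ψ w₀) :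
    HasFDerivAt (fun w => (inner ℂ (ψ w) (T (ψ w)) : ℂ).re) (0 : EuclideanSpace ℝ (Fin d) →L[ℝ] ℝ) w₀ := by
  have hψ' := (hψ w₀).hasFDerivAt
  set D := fderiv ℝ ψ w₀ with hD
  have hTψ : HasFDerivAt (fun w => T (ψ w)) ((T.restrictScalars ℝ).comp D) w₀ :=
    (T.restrictScalars ℝ).hasFDerivAt.comp w₀ hψ'
  have hInner : HasFDerivAt (fun w => (inner ℂ (ψ w) (T (ψ w)) : ℂ))
      ((fderivInnerCLM ℂ (ψ w₀, T (ψ w₀))).comp (D.prod ((T.restrictScalars ℝ).comp D))) w₀ :=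
    hψ'.inner ℂ hTψ
  have hre : HasFDerivAt (fun w => (inner ℂ (ψ w) (T (ψ w)) : ℂ).re)
      (Complex.reCLM.comp ((fderivInnerCLM ℂ (ψ w₀, T (ψ w₀))).comp
        (D.prod ((T.restrictScalars ℝ).comp D)))) w₀ :=
    Complex.reCLM.hasFDerivAt.comp w₀ hInner
  have hL : (Complex.reCLM.comp ((fderivInnerCLM ℂ (ψ w₀, T (ψ w₀))).comp
      (D.prod ((T.restrictScalars ℝ).comp D)))) = 0 := ?_
  · exact hL ▸ hre
  -- derivative of the constant ⟪ψ w, ψ w⟫ is zero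
  have h0 : ∀ u, (inner ℂ (ψ w₀) (D u) : ℂ) + inner ℂ (D u) (ψ w₀) = 0 := by
    have h1 : HasFDerivAt (fun w => (inner ℂ (ψ w) (ψ w) : ℂ))
        ((fderivInnerCLM ℂ (ψ w₀, ψ w₀)).comp (D.prod D)) w₀ := hψ'.inner ℂ hψ'
    have h2 : (fun w => (inner ℂ (ψ w) (ψ w) : ℂ)) = fun _ => 1 := by
      funext w
      rw [inner_self_eq_norm_sq_to_K, hnorm]
      norm_num
    have h3 := h1.fderiv
    rw [h2, fderiv_fun_const] at h3
    intro u
    have := congrFun (congrArg (fun (L : _ →L[ℝ] ℂ) => (L : _ → ℂ)) h3.symm) u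
    simpa [fderivInnerCLM_apply] using this
  ext u
  simp only [ContinuousLinearMap.coe_comp', Function.comp_apply,
    ContinuousLinearMap.prod_apply, fderivInnerCLM_apply,
    ContinuousLinearMap.coe_restrictScalars', Complex.reCLM_apply,
    ContinuousLinearMap.zero_apply]
  have hsym : (inner ℂ (ψ w₀) (T (D u)) : ℂ) = inner ℂ (T (ψ w₀)) (D u) := (hT _ _).symm
  rw [hsym, heig, RCLike.real_smul_eq_coe_smul (K := ℂ),
    inner_smul_left, inner_smul_right, RCLike.conj_ofReal, ← mul_add, h0 u]
  simp


/-- Theorem 2 of the paper, stationarity: the excited-state Kohn–Sham functional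
`E_v(w_s) = Re ⟪ψ(W(w_s)), (A + diag v) ψ(W(w_s))⟫` is stationary with respect to
variations of the trial noninteracting potential `w_s` at any point `ws₀` where
the mapped interacting potential `W(ws₀)` equals the physical potential `v` up to
a constant. -/
theorem ks_potential_functional_stationary (d : ℕ) (A : Matrix (Fin d) (Fin d) ℂ)
    (hA : A.IsHermitian)
    (ψ : EuclideanSpace ℝ (Fin d) → EuclideanSpace ℂ (Fin d))
    (lam : EuclideanSpace ℝ (Fin d) → ℝ)
    (hψ : Differentiable ℝ ψ) (hlam : Differentiable ℝ lam)
    (hnorm : ∀ w, ‖ψ w‖ = 1)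
    (heig : ∀ w, (A + Matrix.diagonal fun i => (w i : ℂ)).mulVec (ψ w) = lam w • ψ w)
    (W : EuclideanSpace ℝ (Fin d) → EuclideanSpace ℝ (Fin d))
    (hW : Differentiable ℝ W)
    (v ws₀ : EuclideanSpace ℝ (Fin d))
    (hconst : ∃ c : ℝ, ∀ i, v i - W ws₀ i = c) :
    fderiv ℝ (fun ws' => (inner ℂ (ψ (W ws'))
        (WithLp.toLp 2 ((A + Matrix.diagonal fun i => (v i : ℂ)).mulVec (ψ (W ws'))) :
          EuclideanSpace ℂ (Fin d)) : ℂ).re) ws₀ = 0 := by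
  obtain ⟨c, hc⟩ := hconst
  set M := A + Matrix.diagonal fun i => (v i : ℂ) with hM
  have hMherm : M.IsHermitian :=
    hA.add (Matrix.isHermitian_diagonal_of_self_adjoint _
      (by ext i; simp [Pi.star_apply, Complex.conj_ofReal]))
  set T : EuclideanSpace ℂ (Fin d) →L[ℂ] EuclideanSpace ℂ (Fin d) :=
    LinearMap.toContinuousLinearMap (Matrix.toEuclideanLin M) with hTdef
  have hTapp : ∀ x : EuclideanSpace ℂ (Fin d),
      T x = (WithLp.toLp 2 (M.mulVec x) : EuclideanSpace ℂ (Fin d)) := fun x => rfl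
  have hT : ∀ x y : EuclideanSpace ℂ (Fin d), (inner ℂ (T x) y : ℂ) = inner ℂ x (T y) :=
    fun x y => (Matrix.isHermitian_iff_isSymmetric.mp hMherm) x y
  have heig₀ : T (ψ (W ws₀)) = (lam (W ws₀) + c) • ψ (W ws₀) := by
    rw [hTapp]
    ext i
    have h1 := congrFun (heig (W ws₀)) i
    have h2 : (v i : ℂ) = (W ws₀ i : ℂ) + (c : ℂ) := by
      have := hc i; push_cast [← this]; ring
    have hs : ∀ (r : ℝ) (x : EuclideanSpace ℂ (Fin d)) (i : Fin d),
        (r • x) i = (r : ℂ) * x i := fun r x i => by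
      simp [Complex.real_smul]
    simp only [hM, Matrix.add_mulVec, Pi.add_apply, Matrix.mulVec_diagonal, hs, PiLp.toLp_apply, Pi.smul_apply, Complex.real_smul] at h1 ⊢
    rw [h2] at *
    push_cast at *
    linear_combination h1
  have key := aux_stationary T hT ψ hψ hnorm (W ws₀) (lam (W ws₀) + c) heig₀
  have hcomp := key.comp ws₀ (hW ws₀).hasFDerivAt
  rw [ContinuousLinearMap.zero_comp] at hcomp
  exact hcomp.fderiv
end

section
/- (Converse of Theorem 2) Let d ∈ ℕ, let A be a Hermitian d×d complex matrix, let ψ : ℝ^d → EuclideanSpace ℂ (Fin d), lam : ℝ^d → ℝ be differentiable with ‖ψ(w)‖ = 1 and (A + diag(w)).mulVec (ψ w) = lam w • ψ w for every w, and let W : ℝ^d → ℝ^d be differentiable. Fix v ∈ ℝ^d, define E_v(w_s) = Re ⟪ψ(W(w_s)), (A + diag(v)).mulVec (ψ (W(w_s)))⟫ and (ρ∘W)(w_s)_i = |ψ(W(w_s))_i|². Let w_s⁰ ∈ ℝ^d and suppose every x ∈ ℝ^d that is Euclidean-orthogonal to the range of the linear map u ↦ fderiv (ρ∘W) at w_s⁰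 applied to u is a real multiple of 𝟙 = (1,…,1). If the Fréchet derivative of E_v at w_s⁰ is zero, then v − W(w_s⁰) is a constant vector. -/
section Aux

variable (d : ℕ)

/-- Expansion of the quadratic form of `A + diagonal (c : ℝᵈ)` at `x`. -/
lemma ks_aux_expand_re_inner (A : Matrix (Fin d) (Fin d) ℂ)
    (c : EuclideanSpace ℝ (Fin d)) (x : EuclideanSpace ℂ (Fin d)) :
    (inner ℂ x (WithLp.toLp 2 ((A + Matrix.diagonal fun i => (c i : ℂ)).mulVec x) : EuclideanSpace ℂ (Fin d)) : ℂ).re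
      = (inner ℂ x (WithLp.toLp 2 (A.mulVec x) : EuclideanSpace ℂ (Fin d)) : ℂ).re + ∑ i, c i * ‖x i‖ ^ 2 := by
  simp only [PiLp.inner_apply, PiLp.toLp_apply, RCLike.inner_apply', Matrix.add_mulVec]
  simp only [Pi.add_apply, mul_add, Finset.sum_add_distrib, Complex.add_re, Complex.re_sum]
  congr 1
  refine Finset.sum_congr rfl fun i _ => ?_
  rw [Matrix.mulVec_diagonal, mul_left_comm, mul_comm ((starRingEnd ℂ) (x i)), Complex.mul_conj]
  simp [Complex.sq_norm]

lemma ks_aux_psi_comp_diff (ψ : EuclideanSpace ℝ (Fin d) → EuclideanSpace ℂ (Fin d))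
    (hψ : Differentiable ℝ ψ) (i : Fin d) :
    Differentiable ℝ (fun w => ψ w i) := by
  have := (((EuclideanSpace.proj i).restrictScalars ℝ).differentiable).comp hψ
  exact this

lemma ks_aux_sigma_diff (ψ : EuclideanSpace ℝ (Fin d) → EuclideanSpace ℂ (Fin d))
    (hψ : Differentiable ℝ ψ) (i : Fin d) :
    Differentiable ℝ (fun w => ‖ψ w i‖ ^ 2) :=
  (ks_aux_psi_comp_diff d ψ hψ i).norm_sq ℂ

lemma ks_aux_re_inner_diff (M : Matrix (Fin d) (Fin d) ℂ)
    (ψ : EuclideanSpace ℝ (Fin d) → EuclideanSpace ℂ (Fin d)) (hψ : Differentiable ℝ ψ) :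
    Differentiable ℝ
      (fun w => (inner ℂ (ψ w) (WithLp.toLp 2 (M.mulVec (ψ w)) : EuclideanSpace ℂ (Fin d)) : ℂ).re) := by
  set L : EuclideanSpace ℂ (Fin d) →L[ℂ] EuclideanSpace ℂ (Fin d) :=
    Matrix.toEuclideanCLM (𝕜 := ℂ) M with hL
  have hLψ : Differentiable ℝ fun w => L (ψ w) :=
    fun w => ((L.restrictScalars ℝ).differentiableAt).comp w (hψ w)
  have h1 : Differentiable ℝ fun w => (inner ℂ (ψ w) (L (ψ w)) : ℂ) := hψ.inner ℂ hLψ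
  have := Complex.reCLM.differentiable.comp h1
  exact this

/-- The quadratic form of a fixed Hermitian matrix along a normalized eigen-family
has zero derivative at the eigen-point. -/
lemma ks_aux_hf_zero (M : Matrix (Fin d) (Fin d) ℂ) (hM : M.IsHermitian)
    (ψ : EuclideanSpace ℝ (Fin d) → EuclideanSpace ℂ (Fin d)) (hψ : Differentiable ℝ ψ)
    (hnorm : ∀ w, ‖ψ w‖ = 1) (w₀ : EuclideanSpace ℝ (Fin d)) (r : ℝ)
    (heig : M.mulVec (ψ w₀) = r • ψ w₀) :
    fderiv ℝ (fun w => (inner ℂ (ψ w) (WithLp.toLp 2 (M.mulVec (ψ w)) : EuclideanSpace ℂ (Fin d)) : ℂ).re) w₀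
      = 0 := by
  classical
  set L : EuclideanSpace ℂ (Fin d) →L[ℂ] EuclideanSpace ℂ (Fin d) :=
    Matrix.toEuclideanCLM (𝕜 := ℂ) M with hL
  have hLapp : ∀ x : EuclideanSpace ℂ (Fin d), L x = (WithLp.toLp 2 (M.mulVec x) : EuclideanSpace ℂ (Fin d)) :=
    fun _ => rfl
  have hLψ : Differentiable ℝ fun w => L (ψ w) :=
    fun w => ((L.restrictScalars ℝ).differentiableAt).comp w (hψ w)
  have hLd' : HasFDerivAt (fun w => L (ψ w))
      ((L.restrictScalars ℝ).comp (fderiv ℝ ψ w₀)) w₀ :=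
    (L.restrictScalars ℝ).hasFDerivAt.comp w₀ (hψ w₀).hasFDerivAt
  have hLd : ∀ z, fderiv ℝ (fun w => L (ψ w)) w₀ z = L (fderiv ℝ ψ w₀ z) := by
    intro z; rw [hLd'.fderiv]; rfl
  have hconst : (fun w => (inner ℂ (ψ w) (ψ w) : ℂ)) = fun _ => (1 : ℂ) := by
    funext w
    rw [inner_self_eq_norm_sq_to_K, hnorm w]
    norm_num
  have horto : ∀ z, (inner ℂ (ψ w₀) (fderiv ℝ ψ w₀ z) : ℂ)
      + (inner ℂ (fderiv ℝ ψ w₀ z) (ψ w₀) : ℂ) = 0 := by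
    intro z
    have h0 : fderiv ℝ (fun w => (inner ℂ (ψ w) (ψ w) : ℂ)) w₀ = 0 := by
      rw [hconst]; exact fderiv_const_apply _
    have := fderiv_inner_apply (𝕜 := ℂ) (hψ w₀) (hψ w₀) z
    rw [h0] at this
    simpa using this.symm
  have hg : fderiv ℝ (fun w => (inner ℂ (ψ w) (L (ψ w)) : ℂ)) w₀ = 0 := by
    ext z
    rw [fderiv_inner_apply (𝕜 := ℂ) (hψ w₀) (hLψ w₀) z, hLd z]
    have hsym := (Matrix.isHermitian_iff_isSymmetric.mp hM)
    have h1 : (inner ℂ (ψ w₀) (L (fderiv ℝ ψ w₀ z)) : ℂ)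
        = inner ℂ (L (ψ w₀)) (fderiv ℝ ψ w₀ z) := (hsym (ψ w₀) (fderiv ℝ ψ w₀ z)).symm
    rw [h1, hLapp, heig]
    have hr : (WithLp.toLp 2 (r • (ψ w₀).ofLp) : EuclideanSpace ℂ (Fin d)) = (r : ℂ) • ψ w₀ := by
      ext i; simp [Complex.coe_smul]
    rw [hr, inner_smul_left, inner_smul_right, Complex.conj_ofReal,
      ContinuousLinearMap.zero_apply, ← mul_add, horto z, mul_zero]
  have hgd : HasFDerivAt (fun w => (inner ℂ (ψ w) (L (ψ w)) : ℂ))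
      (fderiv ℝ (fun w => (inner ℂ (ψ w) (L (ψ w)) : ℂ)) w₀) w₀ :=
    ((hψ w₀).inner ℂ (hLψ w₀)).hasFDerivAt
  have hcomp := (Complex.reCLM.hasFDerivAt.comp w₀ hgd).fderiv
  have hfun : (fun w => (inner ℂ (ψ w) (WithLp.toLp 2 (M.mulVec (ψ w)) : EuclideanSpace ℂ (Fin d)) : ℂ).re)
      = ⇑Complex.reCLM ∘ fun w => (inner ℂ (ψ w) (L (ψ w)) : ℂ) := rfl
  rw [hfun, hcomp, hg, ContinuousLinearMap.comp_zero]

/-- Pointwise expression of the eigenvalue through the quadratic form. -/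
lemma ks_aux_lam_eq (A : Matrix (Fin d) (Fin d) ℂ)
    (ψ : EuclideanSpace ℝ (Fin d) → EuclideanSpace ℂ (Fin d))
    (lam : EuclideanSpace ℝ (Fin d) → ℝ)
    (hnorm : ∀ w, ‖ψ w‖ = 1)
    (heig : ∀ w, (A + Matrix.diagonal fun i => (w i : ℂ)).mulVec (ψ w) = lam w • ψ w)
    (w : EuclideanSpace ℝ (Fin d)) :
    lam w = (inner ℂ (ψ w) (WithLp.toLp 2 (A.mulVec (ψ w)) : EuclideanSpace ℂ (Fin d)) : ℂ).re
      + ∑ i, w i * ‖ψ w i‖ ^ 2 := by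
  have h1 : lam w = (inner ℂ (ψ w)
      (WithLp.toLp 2 ((A + Matrix.diagonal fun i => (w i : ℂ)).mulVec (ψ w)) : EuclideanSpace ℂ (Fin d))
      : ℂ).re := by
    rw [heig w]
    have hr : (WithLp.toLp 2 (lam w • (ψ w).ofLp) : EuclideanSpace ℂ (Fin d)) = (lam w : ℂ) • ψ w := by
      ext i; simp [Complex.coe_smul]
    rw [hr, inner_smul_right, inner_self_eq_norm_sq_to_K, hnorm w]
    simp
  rw [h1, ks_aux_expand_re_inner d A w (ψ w)]

/-- Hellmann–Feynman: the derivative of the eigenvalue is given by the density. -/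
lemma ks_aux_hf_deriv (A : Matrix (Fin d) (Fin d) ℂ) (hA : A.IsHermitian)
    (ψ : EuclideanSpace ℝ (Fin d) → EuclideanSpace ℂ (Fin d))
    (lam : EuclideanSpace ℝ (Fin d) → ℝ)
    (hψ : Differentiable ℝ ψ)
    (hnorm : ∀ w, ‖ψ w‖ = 1)
    (heig : ∀ w, (A + Matrix.diagonal fun i => (w i : ℂ)).mulVec (ψ w) = lam w • ψ w)
    (w₀ : EuclideanSpace ℝ (Fin d)) (z : EuclideanSpace ℝ (Fin d)) :
    fderiv ℝ lam w₀ z = ∑ i, z i * ‖ψ w₀ i‖ ^ 2 := by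
  classical
  set M : Matrix (Fin d) (Fin d) ℂ := A + Matrix.diagonal fun i => (w₀ i : ℂ) with hMdef
  have hM : M.IsHermitian := by
    refine hA.add ?_
    unfold Matrix.IsHermitian
    rw [Matrix.diagonal_conjTranspose]
    funext i
    simp [Pi.star_def, Complex.conj_ofReal]
  -- lam = quadratic form of M + correction sum
  have key : lam = fun w =>
      (inner ℂ (ψ w) (WithLp.toLp 2 (M.mulVec (ψ w)) : EuclideanSpace ℂ (Fin d)) : ℂ).re
        + ∑ i, (w i - w₀ i) * ‖ψ w i‖ ^ 2 := by
    funext w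
    rw [ks_aux_lam_eq d A ψ lam hnorm heig w, hMdef, ks_aux_expand_re_inner d A w₀ (ψ w)]
    simp only [sub_mul, Finset.sum_sub_distrib]
    ring
  -- derivative of the quadratic-form part is zero
  have hh : HasFDerivAt
      (fun w => (inner ℂ (ψ w) (WithLp.toLp 2 (M.mulVec (ψ w)) : EuclideanSpace ℂ (Fin d)) : ℂ).re)
      (0 : EuclideanSpace ℝ (Fin d) →L[ℝ] ℝ) w₀ := by
    have hz := ks_aux_hf_zero d M hM ψ hψ hnorm w₀ (lam w₀) (by rw [hMdef]; exact heig w₀)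
    exact hz ▸ (ks_aux_re_inner_diff d M ψ hψ w₀).hasFDerivAt
  -- derivative of the sum part
  have hterm : ∀ i : Fin d, HasFDerivAt (fun w => (w i - w₀ i) * ‖ψ w i‖ ^ 2)
      (((w₀ i - w₀ i) • fderiv ℝ (fun w => ‖ψ w i‖ ^ 2) w₀)
        + (‖ψ w₀ i‖ ^ 2) • (EuclideanSpace.proj (𝕜 := ℝ) i)) w₀ := by
    intro i
    have hc : HasFDerivAt (fun w : EuclideanSpace ℝ (Fin d) => w i - w₀ i)
        (EuclideanSpace.proj (𝕜 := ℝ) i) w₀ := by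
      have := ((EuclideanSpace.proj (𝕜 := ℝ) i).hasFDerivAt (x := w₀)).sub_const (w₀ i)
      exact this
    exact hc.mul ((ks_aux_sigma_diff d ψ hψ i) w₀).hasFDerivAt
  have hsum := HasFDerivAt.fun_sum (fun i (_ : i ∈ Finset.univ) => hterm i)
  have htot := (hh.fun_add hsum).fderiv
  rw [← key] at htot
  rw [htot]
  simp [Finset.mul_sum, mul_comm]


end Aux

/-- Converse of Theorem 2: assuming the nondegeneracy condition that the only
vectors orthogonal to the range of the composed density-response map
`u ↦ δ(ρ∘W)/δw_s · u` are the constant vectors, stationarity of the excited-state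
Kohn–Sham functional `E_v` at `ws₀` implies that `v - W(ws₀)` is a constant
vector. -/
theorem ks_potential_functional_stationary_converse (d : ℕ) (A : Matrix (Fin d) (Fin d) ℂ)
    (hA : A.IsHermitian)
    (ψ : EuclideanSpace ℝ (Fin d) → EuclideanSpace ℂ (Fin d))
    (lam : EuclideanSpace ℝ (Fin d) → ℝ)
    (hψ : Differentiable ℝ ψ) (hlam : Differentiable ℝ lam)
    (hnorm : ∀ w, ‖ψ w‖ = 1)
    (heig : ∀ w, (A + Matrix.diagonal fun i => (w i : ℂ)).mulVec (ψ w) = lam w • ψ w)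
    (W : EuclideanSpace ℝ (Fin d) → EuclideanSpace ℝ (Fin d))
    (hW : Differentiable ℝ W)
    (v ws₀ : EuclideanSpace ℝ (Fin d))
    (hnondeg : ∀ x : EuclideanSpace ℝ (Fin d),
      (∀ u : EuclideanSpace ℝ (Fin d),
        (inner ℝ x (fderiv ℝ (fun ws' =>
          (show EuclideanSpace ℝ (Fin d) from WithLp.toLp 2 (fun i => ‖ψ (W ws') i‖ ^ 2))) ws₀ u) : ℝ) = 0) →
      ∃ c : ℝ, ∀ i, x i = c)
    (hstat : fderiv ℝ (fun ws' => (inner ℂ (ψ (W ws'))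
        (WithLp.toLp 2 ((A + Matrix.diagonal fun i => (v i : ℂ)).mulVec (ψ (W ws'))) :
          EuclideanSpace ℂ (Fin d)) : ℂ).re) ws₀ = 0) :
    ∃ c : ℝ, ∀ i, v i - W ws₀ i = c := by
  classical
  -- rewrite the functional pointwise
  have hEv : (fun ws' => (inner ℂ (ψ (W ws'))
        (WithLp.toLp 2 ((A + Matrix.diagonal fun i => (v i : ℂ)).mulVec (ψ (W ws'))) :
          EuclideanSpace ℂ (Fin d)) : ℂ).re)
      = fun ws' => lam (W ws') + ∑ i, (v i - W ws' i) * ‖ψ (W ws') i‖ ^ 2 := by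
    funext ws
    rw [ks_aux_expand_re_inner d A v (ψ (W ws)),
      ks_aux_lam_eq d A ψ lam hnorm heig (W ws)]
    simp only [sub_mul, Finset.sum_sub_distrib]
    ring
  rw [hEv] at hstat
  set W' := fderiv ℝ W ws₀ with hW'
  set Di : Fin d → (EuclideanSpace ℝ (Fin d) →L[ℝ] ℝ) :=
    fun i => fderiv ℝ (fun ws => ‖ψ (W ws) i‖ ^ 2) ws₀ with hDi
  have hσWd : ∀ i, Differentiable ℝ fun ws => ‖ψ (W ws) i‖ ^ 2 :=
    fun i => (ks_aux_sigma_diff d ψ hψ i).comp hW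
  -- derivative of lam ∘ W
  have h1 : HasFDerivAt (fun ws => lam (W ws)) ((fderiv ℝ lam (W ws₀)).comp W') ws₀ := by
    have := ((hlam (W ws₀)).hasFDerivAt).comp ws₀ (hW ws₀).hasFDerivAt
    exact this
  -- derivative of each summand
  have hterm : ∀ i : Fin d, HasFDerivAt (fun ws => (v i - W ws i) * ‖ψ (W ws) i‖ ^ 2)
      ((v i - W ws₀ i) • Di i
        + (‖ψ (W ws₀) i‖ ^ 2) • (-((EuclideanSpace.proj (𝕜 := ℝ) i).comp W'))) ws₀ := by
    intro i
    have hWi : HasFDerivAt (fun ws => W ws i)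
        ((EuclideanSpace.proj (𝕜 := ℝ) i).comp W') ws₀ := by
      have := (EuclideanSpace.proj (𝕜 := ℝ) i).hasFDerivAt.comp ws₀ (hW ws₀).hasFDerivAt
      exact this
    exact (hWi.const_sub (v i)).mul ((hσWd i) ws₀).hasFDerivAt
  have hsum := HasFDerivAt.fun_sum (fun i (_ : i ∈ Finset.univ) => hterm i)
  have htot := (h1.fun_add hsum).fderiv
  rw [hstat] at htot
  -- the key cancellation: for all u, ∑ i (v - W ws₀)_i * (Di u) = 0
  have hkey : ∀ u, ∑ i, (v i - W ws₀ i) * Di i u = 0 := by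
    intro u
    have h0 := congrFun (congrArg (fun (T : EuclideanSpace ℝ (Fin d) →L[ℝ] ℝ) => (T : _ → ℝ))
      htot.symm) u
    simp only [ContinuousLinearMap.add_apply, ContinuousLinearMap.coe_sum',
      Finset.sum_apply, ContinuousLinearMap.coe_smul', Pi.smul_apply,
      ContinuousLinearMap.neg_apply, ContinuousLinearMap.coe_comp', Function.comp_apply,
      ContinuousLinearMap.zero_apply, smul_eq_mul] at h0
    rw [ks_aux_hf_deriv d A hA ψ lam hψ hnorm heig (W ws₀) (W' u)] at h0
    have hproj : ∀ i : Fin d, (EuclideanSpace.proj (𝕜 := ℝ) i) (W' u) = W' u i := fun _ => rfl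
    simp only [hproj] at h0
    have : (0 : ℝ) = ∑ i, (W' u i * ‖ψ (W ws₀) i‖ ^ 2)
        + ∑ i, ((v i - W ws₀ i) * Di i u + ‖ψ (W ws₀) i‖ ^ 2 * -(W' u i)) := by
      simpa [mul_comm] using h0.symm
    rw [Finset.sum_add_distrib, ← add_assoc] at this
    have hcancel : ∑ i, (W' u i * ‖ψ (W ws₀) i‖ ^ 2)
        + ∑ i, ‖ψ (W ws₀) i‖ ^ 2 * -(W' u i) = 0 := by
      rw [← Finset.sum_add_distrib]
      apply Finset.sum_eq_zero
      intro i _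
      ring
    rw [add_right_comm, hcancel, zero_add] at this
    exact this.symm
  -- identify Di with the components of the derivative of the density map
  have hρ : HasFDerivAt (fun ws' =>
      (show EuclideanSpace ℝ (Fin d) from WithLp.toLp 2 (fun i => ‖ψ (W ws') i‖ ^ 2)))
      (((PiLp.continuousLinearEquiv 2 ℝ (fun _ : Fin d => ℝ)).symm :
          (Fin d → ℝ) →L[ℝ] EuclideanSpace ℝ (Fin d)).comp
        (ContinuousLinearMap.pi Di)) ws₀ := by
    have hp : HasFDerivAt (fun ws (i : Fin d) => ‖ψ (W ws) i‖ ^ 2)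
        (ContinuousLinearMap.pi Di) ws₀ :=
      hasFDerivAt_pi.2 fun i => ((hσWd i) ws₀).hasFDerivAt
    have := ((PiLp.continuousLinearEquiv 2 ℝ (fun _ : Fin d => ℝ)).symm :
        (Fin d → ℝ) →L[ℝ] EuclideanSpace ℝ (Fin d)).hasFDerivAt.comp ws₀ hp
    exact this
  have hρd : ∀ u i, (fderiv ℝ (fun ws' =>
      (show EuclideanSpace ℝ (Fin d) from WithLp.toLp 2 (fun i => ‖ψ (W ws') i‖ ^ 2))) ws₀ u) i = Di i u := by
    intro u i
    rw [hρ.fderiv]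
    rfl
  -- apply the nondegeneracy hypothesis
  obtain ⟨c, hc⟩ := hnondeg
    (show EuclideanSpace ℝ (Fin d) from WithLp.toLp 2 (fun i => v i - W ws₀ i)) (by
      intro u
      rw [show (inner ℝ (show EuclideanSpace ℝ (Fin d) from WithLp.toLp 2 (fun i => v i - W ws₀ i))
          (fderiv ℝ (fun ws' =>
            (show EuclideanSpace ℝ (Fin d) from WithLp.toLp 2 (fun i => ‖ψ (W ws') i‖ ^ 2))) ws₀ u) : ℝ)
        = ∑ i, (v i - W ws₀ i) * ((fderiv ℝ (fun ws' =>
            (show EuclideanSpace ℝ (Fin d) from WithLp.toLp 2 (fun i => ‖ψ (W ws') i‖ ^ 2))) ws₀ u) i) from by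
          simp [PiLp.inner_apply, RCLike.inner_apply, mul_comm]]
      simp only [hρd]
      exact hkey u)
  exact ⟨c, fun i => hc i⟩
end

section
/- (Degenerate Hellmann–Feynman) Let d ∈ ℕ and let H, P : ℝ → Matrix (Fin d) (Fin d) ℂ be differentiable families such that for every t: H(t) is Hermitian, P(t) is Hermitian, P(t) * P(t) = P(t), and H(t) * P(t) = P(t) * H(t). Then for every t, the derivative of t ↦ trace (H(t) * P(t)) equals trace ((deriv H t) * P(t)). (The first-order variation of the total energy of an invariant subspace — an ensemble of degenerate eigenstates — equals the trace of the variation of the Hamiltonian against the projection; used to extend Theorem 1 to degenerate states.) -/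
lemma hasDerivAt_trace_mul {d : ℕ} (A B : ℝ → Matrix (Fin d) (Fin d) ℂ)
    (hA : ∀ i j, Differentiable ℝ fun t => A t i j)
    (hB : ∀ i j, Differentiable ℝ fun t => B t i j) (t : ℝ) :
    HasDerivAt (fun s => Matrix.trace (A s * B s))
      (Matrix.trace (entryDeriv A t * B t) + Matrix.trace (A t * entryDeriv B t)) t := by
  have key : HasDerivAt (fun s => ∑ i, ∑ j, A s i j * B s j i)
      (∑ i, ∑ j, (deriv (fun s => A s i j) t * B t j i +
        A t i j * deriv (fun s => B s j i) t)) t := by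
    apply HasDerivAt.fun_sum
    intro i _
    apply HasDerivAt.fun_sum
    intro j _
    exact ((hA i j t).hasDerivAt).mul ((hB j i t).hasDerivAt)
  have e1 : (fun s => Matrix.trace (A s * B s)) = fun s => ∑ i, ∑ j, A s i j * B s j i := by
    funext s
    simp [Matrix.trace, Matrix.diag, Matrix.mul_apply]
  have e2 : Matrix.trace (entryDeriv A t * B t) + Matrix.trace (A t * entryDeriv B t)
      = ∑ i, ∑ j, (deriv (fun s => A s i j) t * B t j i +
        A t i j * deriv (fun s => B s j i) t) := by
    simp [Matrix.trace, Matrix.diag, Matrix.mul_apply, entryDeriv, Finset.sum_add_distrib]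
  rw [e1, e2]
  exact key

lemma entryDeriv_idem {d : ℕ} (P : ℝ → Matrix (Fin d) (Fin d) ℂ)
    (hP : ∀ i j, Differentiable ℝ fun t => P t i j)
    (hidem : ∀ t, P t * P t = P t) (t : ℝ) :
    entryDeriv P t = entryDeriv P t * P t + P t * entryDeriv P t := by
  funext i j
  have h1 : HasDerivAt (fun s => (P s * P s) i j)
      ((entryDeriv P t * P t + P t * entryDeriv P t) i j) t := by
    have : HasDerivAt (fun s => ∑ k, P s i k * P s k j)
        (∑ k, (deriv (fun s => P s i k) t * P t k j +
          P t i k * deriv (fun s => P s k j) t)) t := by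
      apply HasDerivAt.fun_sum
      intro k _
      exact ((hP i k t).hasDerivAt).mul ((hP k j t).hasDerivAt)
    convert this using 2
    all_goals simp [Matrix.add_apply, Matrix.mul_apply, entryDeriv, Finset.sum_add_distrib]
  have h2 : HasDerivAt (fun s => P s i j) ((entryDeriv P t * P t + P t * entryDeriv P t) i j) t := by
    simpa [hidem] using h1
  exact h2.deriv

lemma trace_H_mul_derivP_eq_zero {d : ℕ} (A Q Q' : Matrix (Fin d) (Fin d) ℂ)
    (hQ' : Q' = Q' * Q + Q * Q')
    (hQQ : Q * Q = Q)
    (hc : A * Q = Q * A) :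
    Matrix.trace (A * Q') = 0 := by
  have h1 : Matrix.trace (A * Q * Q') = 0 := by
    have e : Matrix.trace (A * Q * Q') =
        Matrix.trace (A * Q * (Q' * Q)) + Matrix.trace (A * Q * (Q * Q')) := by
      conv_lhs => rw [hQ']
      rw [Matrix.mul_add, Matrix.trace_add]
    have e1 : Matrix.trace (A * Q * (Q' * Q)) = Matrix.trace (A * Q * Q') := by
      rw [show A * Q * (Q' * Q) = (A * Q * Q') * Q by noncomm_ring, Matrix.trace_mul_comm,
        show Q * (A * Q * Q') = (Q * A) * (Q * Q') by noncomm_ring, ← hc,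
        show (A * Q) * (Q * Q') = A * (Q * Q) * Q' by noncomm_ring, hQQ]
    have e2 : Matrix.trace (A * Q * (Q * Q')) = Matrix.trace (A * Q * Q') := by
      rw [show A * Q * (Q * Q') = A * (Q * Q) * Q' by noncomm_ring, hQQ]
    rw [e1, e2] at e
    linear_combination -e
  have e : Matrix.trace (A * Q') =
      Matrix.trace (A * (Q' * Q)) + Matrix.trace (A * (Q * Q')) := by
    conv_lhs => rw [hQ']
    rw [Matrix.mul_add, Matrix.trace_add]
  have e1 : Matrix.trace (A * (Q' * Q)) = Matrix.trace (A * Q * Q') := by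
    rw [show A * (Q' * Q) = (A * Q') * Q by noncomm_ring, Matrix.trace_mul_comm,
      show Q * (A * Q') = (Q * A) * Q' by noncomm_ring, ← hc]
  have e2 : Matrix.trace (A * (Q * Q')) = Matrix.trace (A * Q * Q') := by
    rw [Matrix.mul_assoc]
  rw [e, e1, e2, h1]
  ring

/-- Degenerate Hellmann–Feynman theorem: for a differentiable family of Hermitian
Hamiltonians `H t` and a differentiable family of orthogonal projections `P t`
onto `H t`-invariant subspaces, the derivative of the ensemble energy
`trace (H t * P t)` equals `trace ((deriv H t) * P t)`. -/
theorem degenerate_hellmann_feynman (d : ℕ)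
    (H P : ℝ → Matrix (Fin d) (Fin d) ℂ)
    (hH : ∀ i j, Differentiable ℝ fun t => H t i j)
    (hP : ∀ i j, Differentiable ℝ fun t => P t i j)
    (hHerm : ∀ t, (H t).IsHermitian)
    (hPHerm : ∀ t, (P t).IsHermitian)
    (hidem : ∀ t, P t * P t = P t)
    (hcomm : ∀ t, H t * P t = P t * H t) (t : ℝ) :
    deriv (fun s => Matrix.trace (H s * P s)) t = Matrix.trace (entryDeriv H t * P t) := by
  have key := (hasDerivAt_trace_mul H P hH hP t).deriv
  rw [key]
  have hz : Matrix.trace (H t * entryDeriv P t) = 0 :=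
    trace_H_mul_derivP_eq_zero (H t) (P t) (entryDeriv P t)
      (entryDeriv_idem P hP hidem t) (hidem t) (hcomm t)
  rw [hz, add_zero]
end

section
/- (Theorem 1 for degenerate states, ensemble form) Let d ∈ ℕ, let A be a Hermitian d×d complex matrix, and let P : ℝ^d → Matrix (Fin d) (Fin d) ℂ be differentiable such that for every w ∈ ℝ^d: P(w) is Hermitian, P(w) * P(w) = P(w), (A + diag(w)) * P(w) = P(w) * (A + diag(w)), and trace (P(w)) = N for a fixed constant N. Fix v ∈ ℝ^d and define E_v : ℝ^d → ℝ by E_v(w) = Re (trace ((A + diag(v)) * P(w))). If w₀ ∈ ℝ^d is such that v − w₀ is a constant vector (all components equal), then the Fréchet derivative of E_v at w₀ is the zero linear map. -/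
open scoped BigOperators

/-- Matrix algebra: if `P` is idempotent, `H` commutes with `P`, and
`Q = Q*P + P*Q`, then `trace (H*Q) = 0`. -/
lemma trace_HQ_zero {d : ℕ} (H P Q : Matrix (Fin d) (Fin d) ℂ)
    (hP : P * P = P) (hc : H * P = P * H) (hQ : Q = Q * P + P * Q) :
    (H * Q).trace = 0 := by
  have e1 : (H * P * Q).trace = (H * P * Q * P).trace + (H * P * Q).trace := by
    nth_rewrite 1 [hQ]
    rw [mul_add, Matrix.trace_add]
    congr 1
    · rw [← mul_assoc]
    · rw [← mul_assoc, mul_assoc H P P, hP]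
  have e2 : (H * P * Q * P).trace = 0 := right_eq_add.mp e1
  have cycQ : (H * P * Q * P).trace = (H * P * Q).trace := by
    rw [Matrix.trace_mul_comm (H * P * Q) P, ← mul_assoc, ← mul_assoc, ← hc,
      mul_assoc H P P, hP]
  have key : (H * P * Q).trace = 0 := by rw [← cycQ]; exact e2
  have t2 : (H * (P * Q)).trace = 0 := by rw [← mul_assoc]; exact key
  have t1 : (H * (Q * P)).trace = 0 := by
    rw [← mul_assoc, Matrix.trace_mul_comm (H * Q) P, ← mul_assoc, ← hc]
    exact key
  nth_rewrite 1 [hQ]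
  rw [mul_add, Matrix.trace_add, t1, t2, add_zero]

/-- Theorem 1 for degenerate states, ensemble form: given a differentiable family
`w ↦ P w` of orthogonal projections commuting with `A + diag w` and of constant
trace `N`, the ensemble energy functional
`E_v(w) = Re (trace ((A + diag v) * P w))` is stationary at any `w₀` such that
`v - w₀` is a constant vector. -/
theorem ensemble_potential_functional_stationary (d : ℕ) (A : Matrix (Fin d) (Fin d) ℂ)
    (hA : A.IsHermitian)
    (P : EuclideanSpace ℝ (Fin d) → Matrix (Fin d) (Fin d) ℂ)
    (hP : ∀ i j, Differentiable ℝ fun w => P w i j)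
    (hHerm : ∀ w, (P w).IsHermitian)
    (hidem : ∀ w, P w * P w = P w)
    (hcomm : ∀ w, (A + Matrix.diagonal fun i => (w i : ℂ)) * P w
      = P w * (A + Matrix.diagonal fun i => (w i : ℂ)))
    (N : ℂ) (htrace : ∀ w, Matrix.trace (P w) = N)
    (v w₀ : EuclideanSpace ℝ (Fin d))
    (hconst : ∃ c : ℝ, ∀ i, v i - w₀ i = c) :
    fderiv ℝ (fun w =>
      (Matrix.trace ((A + Matrix.diagonal fun i => (v i : ℂ)) * P w)).re) w₀ = 0 := by
  obtain ⟨c, hc⟩ := hconst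
  set M : Matrix (Fin d) (Fin d) ℂ := A + Matrix.diagonal fun i => (v i : ℂ) with hM
  set H : Matrix (Fin d) (Fin d) ℂ := A + Matrix.diagonal fun i => (w₀ i : ℂ) with hH
  set L : Fin d → Fin d → (EuclideanSpace ℝ (Fin d) →L[ℝ] ℂ) :=
    fun i j => fderiv ℝ (fun w => P w i j) w₀ with hL
  have hPd : ∀ i j, HasFDerivAt (fun w => P w i j) (L i j) w₀ :=
    fun i j => (hP i j w₀).hasFDerivAt
  -- derivative of the idempotency relation
  have hQrel : ∀ a b, L a b = ∑ k, (P w₀ a k • L k b + P w₀ k b • L a k) := by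
    intro a b
    have h1 : HasFDerivAt (fun w => ∑ k, P w a k * P w k b)
        (∑ k, (P w₀ a k • L k b + P w₀ k b • L a k)) w₀ :=
      HasFDerivAt.fun_sum fun k _ => (hPd a k).mul (hPd k b)
    have h2 : (fun w => ∑ k, P w a k * P w k b) = fun w => P w a b := by
      funext w
      rw [← Matrix.mul_apply, hidem]
    rw [h2] at h1
    exact (hPd a b).unique h1
  -- derivative of the trace relation
  have htr0 : (∑ i, L i i) = 0 := by
    have h1 : HasFDerivAt (fun w => ∑ i, P w i i) (∑ i, L i i) w₀ :=
      HasFDerivAt.fun_sum fun i _ => hPd i i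
    have h2 : (fun w : EuclideanSpace ℝ (Fin d) => ∑ i, P w i i) = fun _ => N := by
      funext w
      simpa [Matrix.trace, Matrix.diag] using htrace w
    rw [h2] at h1
    exact h1.unique (hasFDerivAt_const N w₀)
  -- the main derivative
  have hmain : HasFDerivAt (fun w => (Matrix.trace (M * P w)).re)
      (∑ i, ∑ k, Complex.reCLM.comp (M i k • L k i)) w₀ := by
    have h1 : HasFDerivAt (fun w => ∑ i, ∑ k, (M i k * P w k i).re)
        (∑ i, ∑ k, Complex.reCLM.comp (M i k • L k i)) w₀ :=
      HasFDerivAt.fun_sum fun i _ => HasFDerivAt.fun_sum fun k _ =>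
        Complex.reCLM.hasFDerivAt.comp w₀ ((hPd k i).const_mul (M i k))
    have h2 : (fun w => (Matrix.trace (M * P w)).re)
        = fun w => ∑ i, ∑ k, (M i k * P w k i).re := by
      funext w
      simp [Matrix.trace, Matrix.diag, Matrix.mul_apply, Complex.re_sum]
    rw [h2]
    exact h1
  rw [hmain.fderiv]
  -- show the derivative vanishes
  ext u
  have hMH : M = H + (c : ℂ) • 1 := by
    rw [hM, hH, add_assoc]
    congr 1
    ext i j
    by_cases h : i = j
    · subst h
      have hvi : (v i : ℝ) = w₀ i + c := by linarith [hc i]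
      simp [Matrix.diagonal_apply, Matrix.one_apply, hvi]
    · simp [Matrix.diagonal_apply, Matrix.one_apply, h]
  set Q : Matrix (Fin d) (Fin d) ℂ := Matrix.of fun a b => L a b u with hQdef
  have hQ : Q = Q * P w₀ + P w₀ * Q := by
    ext a b
    have := congrFun (congrArg DFunLike.coe (hQrel a b)) u
    simp only [ContinuousLinearMap.coe_sum', Finset.sum_apply,
      ContinuousLinearMap.add_apply, ContinuousLinearMap.coe_smul',
      Pi.smul_apply, smul_eq_mul] at this
    simp only [Matrix.add_apply, Matrix.mul_apply, hQdef, Matrix.of_apply]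
    rw [this, ← Finset.sum_add_distrib]
    congr 1
    funext k
    ring
  have hQtr : Q.trace = 0 := by
    have := congrFun (congrArg DFunLike.coe htr0) u
    simp only [ContinuousLinearMap.coe_sum', Finset.sum_apply,
      ContinuousLinearMap.zero_apply] at this
    simpa [Matrix.trace, Matrix.diag, hQdef] using this
  have hHQ : (H * Q).trace = 0 := trace_HQ_zero H (P w₀) Q (hidem w₀) (hcomm w₀) hQ
  have hMQ : (M * Q).trace = 0 := by
    rw [hMH, add_mul, Matrix.trace_add, hHQ, zero_add, Matrix.smul_mul, one_mul,
      Matrix.trace_smul, hQtr, smul_zero]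
  have hfinal : (∑ i, ∑ k, M i k * Q k i) = 0 := by
    rw [← hMQ]
    simp [Matrix.trace, Matrix.diag, Matrix.mul_apply]
  calc (∑ i, ∑ k, Complex.reCLM.comp (M i k • L k i)) u
      = ∑ i, ∑ k, (M i k * L k i u).re := by
        simp [ContinuousLinearMap.coe_sum', Finset.sum_apply]
    _ = (∑ i, ∑ k, M i k * Q k i).re := by
        simp [Complex.re_sum, hQdef]
    _ = 0 := by rw [hfinal]; simp
end
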